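/- arXiv:2002.07826 — 7 statements merged into one kernel-verified Lean document; each statement's English description precedes it below -/
import Mathlib

section
/- Let C be a linear [n,k]_q code with generator matrix G ∈ F_q^{k×n} of rank k, let φ = (M, α) ∈ Aut(C), and let A_φ ∈ GL(k, F_q) satisfy (G M)^α = A_φ G. Let a, b ∈ F_q^k with b^T = (A_φ a^T)^{α^{-1}}. Then the semimonomial transformation ([[M,0],[0,1]], α) of F_q^{n+1} maps the code generated by (G | b^T) onto the code generated by (G | a^T); in particular, the [n+1,k]_q codes generated by (G | a^T) and (G | b^T) are equivalent via a semimonomial transformation whose underlying coordinate permutation fixes the last coordinate. -/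
open Matrix

variable {F : Type*} [Field F]

/-- A monomial matrix: a product `D * P` of an invertible diagonal matrix and a
permutation matrix. -/
def IsMonomial {n : Type*} [Fintype n] [DecidableEq n] (M : Matrix n n F) : Prop :=
  ∃ (d : n → Fˣ) (P : Equiv.Perm n),
    M = Matrix.diagonal (fun i => (d i : F)) * P.permMatrix F

/-- The semimonomial transformation `(M, α)` acting by `v ↦ (v M)^α`. -/
def semiMap {n : Type*} [Fintype n] (M : Matrix n n F) (α : F ≃+* F) (v : n → F) : n → F :=
  fun j => α (Matrix.vecMul v M j)

/-- The row space of a matrix. -/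
def rowSpan {k n : Type*} (G : Matrix k n F) : Submodule F (n → F) :=
  Submodule.span F (Set.range fun i => G i)

/-- Two linear codes are equivalent if some semimonomial transformation maps
one onto the other. -/
def CodeEquiv {n : Type*} [Fintype n] [DecidableEq n] (C1 C2 : Submodule F (n → F)) : Prop :=
  ∃ (M : Matrix n n F) (α : F ≃+* F),
    IsMonomial M ∧ semiMap M α '' (C1 : Set (n → F)) = (C2 : Set (n → F))

/-- The matrix `(G | aᵀ)` obtained from `G` by appending the column `aᵀ`. -/
def appendCol {k n : Type*} (G : Matrix k n F) (a : k → F) : Matrix k (n ⊕ Unit) F :=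
  Matrix.of fun i => Sum.elim (G i) (fun _ => a i)

section Aux
variable {m : Type*} [Fintype m] [DecidableEq m]

lemma mon_apply (d : m → Fˣ) (σ : Equiv.Perm m) (i j : m) :
    (Matrix.diagonal (fun i => (d i : F)) * σ.permMatrix F) i j
      = if j = σ i then (d i : F) else 0 := by
  simp only [Matrix.mul_apply, Equiv.Perm.permMatrix, PEquiv.toMatrix, Equiv.toPEquiv,
    Matrix.diagonal]
  rw [Finset.sum_eq_single i]
  · simp [eq_comm]
  · intro b _ hb; simp [Ne.symm hb]
  · simp

lemma isMonomial_of_entries (M : Matrix m m F) (d : m → Fˣ) (σ : Equiv.Perm m)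
    (h : ∀ i j, M i j = if j = σ i then (d i : F) else 0) : IsMonomial M :=
  ⟨d, σ, by ext i j; rw [mon_apply]; exact h i j⟩

lemma mon_mul_inv (d : m → Fˣ) (σ : Equiv.Perm m) :
    (Matrix.diagonal (fun i => (d i : F)) * σ.permMatrix F) *
      (Matrix.diagonal (fun i => (((d (σ⁻¹ i))⁻¹ : Fˣ) : F)) * (σ⁻¹).permMatrix F) = 1 := by
  ext i k
  rw [Matrix.mul_apply, Finset.sum_eq_single (σ i)]
  · rw [mon_apply, mon_apply]
    by_cases h : k = i
    · simp [h, Matrix.one_apply]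
    · simp only [Matrix.one_apply, if_neg (fun hh : i = k => h hh.symm)]
      simp [h]
  · intro b _ hb; rw [mon_apply]; simp [hb]
  · simp

lemma IsMonomial.isUnit {M : Matrix m m F} (h : IsMonomial M) : IsUnit M := by
  obtain ⟨d, σ, rfl⟩ := h
  have := mon_mul_inv (F := F) d σ
  exact ⟨⟨_, _, this, mul_eq_one_comm.mp this⟩, rfl⟩

lemma IsMonomial.inv {M : Matrix m m F} (h : IsMonomial M) : IsMonomial M⁻¹ := by
  obtain ⟨d, σ, rfl⟩ := h
  rw [Matrix.inv_eq_right_inv (mon_mul_inv d σ)]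
  exact ⟨_, _, rfl⟩

lemma IsMonomial.map {M : Matrix m m F} (h : IsMonomial M) (α : F ≃+* F) :
    IsMonomial (M.map ⇑α) := by
  obtain ⟨d, σ, rfl⟩ := h
  refine isMonomial_of_entries _ (fun i => Units.map α.toMonoidHom (d i)) σ (fun i j => ?_)
  simp [Matrix.map_apply, mon_apply, apply_ite α, Equiv.toPEquiv_apply, eq_comm]
end Aux

lemma isMonomial_block {n : Type*} [Fintype n] [DecidableEq n] {M : Matrix n n F}
    (h : IsMonomial M) :
    IsMonomial (Matrix.fromBlocks M 0 0 (1 : Matrix Unit Unit F)) := by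
  obtain ⟨d, σ, rfl⟩ := h
  refine isMonomial_of_entries _ (Sum.elim d fun _ => 1) (Equiv.sumCongr σ (Equiv.refl Unit))
    (fun i j => ?_)
  cases i with
  | inl i => cases j with
    | inl j => simp [Matrix.fromBlocks, mon_apply, Equiv.toPEquiv_apply, eq_comm]
    | inr j => simp [Matrix.fromBlocks]
  | inr i => cases j with
    | inl j => simp [Matrix.fromBlocks]
    | inr j => simp [Matrix.fromBlocks, Matrix.one_apply]

section Span
variable {k m : Type*} [Fintype k] [DecidableEq k] [Fintype m]

/-- `semiMap` as a semilinear map. -/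
def semiLin (N : Matrix m m F) (α : F ≃+* F) :
    (m → F) →ₛₗ[(α : F →+* F)] (m → F) where
  toFun := semiMap N α
  map_add' u v := funext fun j => by
    simp [semiMap, Matrix.add_vecMul]
  map_smul' c v := funext fun j => by
    simp [semiMap, Matrix.smul_vecMul, smul_eq_mul]

lemma rowSpan_mul_le (B : Matrix k k F) (Y : Matrix k m F) :
    rowSpan (B * Y) ≤ rowSpan Y := by
  rw [rowSpan, Submodule.span_le]
  rintro _ ⟨i, rfl⟩
  have h : (B * Y) i = ∑ l, B i l • Y l := by
    funext j; simp [Matrix.mul_apply, Finset.sum_apply]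
  show (B * Y) i ∈ rowSpan Y
  rw [h]
  exact Submodule.sum_mem _ fun l _ =>
    Submodule.smul_mem _ _ (Submodule.subset_span ⟨l, rfl⟩)

lemma rowSpan_unit_mul {B : Matrix k k F} (hB : IsUnit B) (Y : Matrix k m F) :
    rowSpan (B * Y) = rowSpan Y := by
  refine le_antisymm (rowSpan_mul_le B Y) ?_
  have h1 : B⁻¹ * B = 1 := Matrix.nonsing_inv_mul B ((Matrix.isUnit_iff_isUnit_det B).mp hB)
  have h2 : Y = B⁻¹ * (B * Y) := by rw [← Matrix.mul_assoc, h1, Matrix.one_mul]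
  calc rowSpan Y = rowSpan (B⁻¹ * (B * Y)) := by rw [← h2]
    _ ≤ rowSpan (B * Y) := rowSpan_mul_le _ _

lemma semiMap_rowSpan (X Y : Matrix k m F) (N : Matrix m m F) (α : F ≃+* F)
    (B : Matrix k k F) (hB : IsUnit B) (h : (X * N).map ⇑α = B * Y) :
    semiMap N α '' (rowSpan X : Set (m → F)) = (rowSpan Y : Set (m → F)) := by
  haveI : RingHomSurjective (α : F →+* F) := ⟨α.surjective⟩
  have himg : semiMap N α '' (rowSpan X : Set (m → F))
      = (Submodule.map (semiLin N α) (rowSpan X) : Set (m → F)) := rfl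
  rw [himg]
  rw [show rowSpan X = Submodule.span F (Set.range fun i => X i) from rfl]
  rw [Submodule.map_span, ← Set.range_comp]
  have hc : (semiLin N α) ∘ (fun i => X i) = fun i => ((X * N).map ⇑α) i := by
    funext i j
    simp [semiLin, semiMap, Matrix.map_apply, Matrix.mul_apply, Matrix.vecMul,
      dotProduct]
  rw [hc, h]
  exact congrArg _ (rowSpan_unit_mul hB Y)

end Span

section Append
variable {k n : Type*} [Fintype k] [Fintype n]

lemma appendCol_mul_fromBlocks (G : Matrix k n F) (c : k → F) (M : Matrix n n F) :
    appendCol G c * Matrix.fromBlocks M 0 0 (1 : Matrix Unit Unit F)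
      = appendCol (G * M) c := by
  ext i j
  cases j with
  | inl j =>
      simp [appendCol, Matrix.mul_apply, Fintype.sum_sum_type, Matrix.fromBlocks]
  | inr j =>
      simp [appendCol, Matrix.mul_apply, Fintype.sum_sum_type, Matrix.fromBlocks,
        Matrix.one_apply]

lemma appendCol_map (G : Matrix k n F) (c : k → F) (f : F → F) :
    (appendCol G c).map f = appendCol (G.map f) (f ∘ c) := by
  ext i j; cases j <;> simp [appendCol, Matrix.map_apply]

lemma mul_appendCol (A : Matrix k k F) (G : Matrix k n F) (c : k → F) :
    A * appendCol G c = appendCol (A * G) (A *ᵥ c) := by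
  ext i j
  cases j <;> simp [appendCol, Matrix.mul_apply, Matrix.mulVec, dotProduct]

end Append

lemma map_mul_equiv {p q r : Type*} [Fintype q] (X : Matrix p q F) (Y : Matrix q r F)
    (α : F ≃+* F) : (X * Y).map ⇑α = X.map ⇑α * Y.map ⇑α :=
  Matrix.map_mul (f := (α : F →+* F))


/-- Let `C` have generator matrix `G` of rank `k`, let `φ = (M, α) ∈ Aut(C)` and
`A_φ ∈ GL(k, F_q)` with `(G M)^α = A_φ G`, and let `bᵀ = (A_φ aᵀ)^{α⁻¹}`.  Then the
semimonomial transformation `([[M,0],[0,1]], α)` maps the code generated by `(G | bᵀ)`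
onto the code generated by `(G | aᵀ)`; in particular the two `[n+1,k]_q` codes are
equivalent (via a transformation whose coordinate permutation fixes the last coordinate). -/
theorem stmt3 [Fintype F] {n k : ℕ}
    (C : Submodule F (Fin n → F)) (G : Matrix (Fin k) (Fin n) F)
    (hG : rowSpan G = C) (hrank : G.rank = k)
    (M : Matrix (Fin n) (Fin n) F) (α : F ≃+* F)
    (hM : IsMonomial M)
    (hAut : semiMap M α '' (C : Set (Fin n → F)) = (C : Set (Fin n → F)))
    (A : Matrix (Fin k) (Fin k) F) (hA : IsUnit A)
    (hAG : (G * M).map ⇑α = A * G)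
    (a b : Fin k → F)
    (hb : b = fun i => α.symm ((A *ᵥ a) i)) :
    semiMap (Matrix.fromBlocks M 0 0 (1 : Matrix Unit Unit F)) α ''
        (rowSpan (appendCol G b) : Set ((Fin n ⊕ Unit) → F)) =
        (rowSpan (appendCol G a) : Set ((Fin n ⊕ Unit) → F)) ∧
      CodeEquiv (rowSpan (appendCol G a)) (rowSpan (appendCol G b)) := by
  set N : Matrix (Fin n ⊕ Unit) (Fin n ⊕ Unit) F := Matrix.fromBlocks M 0 0 1 with hN
  have hNmon : IsMonomial N := isMonomial_block hM
  have hNunit : IsUnit N := hNmon.isUnit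
  -- the key matrix identity
  have h1 : (appendCol G b * N).map ⇑α = A * appendCol G a := by
    rw [appendCol_mul_fromBlocks, appendCol_map, hAG, mul_appendCol]
    have hab : ⇑α ∘ b = A *ᵥ a := by funext i; simp [hb]
    rw [hab]
  have hfirst : semiMap N α '' (rowSpan (appendCol G b) : Set ((Fin n ⊕ Unit) → F))
      = (rowSpan (appendCol G a) : Set ((Fin n ⊕ Unit) → F)) :=
    semiMap_rowSpan _ _ N α A hA h1
  refine ⟨hfirst, ?_⟩
  -- the reverse equivalence
  have hNdet : IsUnit N.det := (Matrix.isUnit_iff_isUnit_det N).mp hNunit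
  have hAdet : IsUnit A.det := (Matrix.isUnit_iff_isUnit_det A).mp hA
  set N' : Matrix (Fin n ⊕ Unit) (Fin n ⊕ Unit) F := (N⁻¹).map ⇑α with hN'
  have hN'mon : IsMonomial N' := hNmon.inv.map α
  -- key identity in the other direction
  have h2 : (appendCol G a * N').map ⇑α.symm = ((A⁻¹).map ⇑α.symm) * appendCol G b := by
    have hY : appendCol G a = A⁻¹ * ((appendCol G b * N).map ⇑α) := by
      rw [h1, ← Matrix.mul_assoc, Matrix.nonsing_inv_mul A hAdet, Matrix.one_mul]
    have : appendCol G a * N' = A⁻¹ * (appendCol G b).map ⇑α := by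
      rw [hY, Matrix.mul_assoc, hN', ← map_mul_equiv, Matrix.mul_assoc,
        Matrix.mul_nonsing_inv N hNdet, Matrix.mul_one]
    rw [this, map_mul_equiv _ _ α.symm]
    congr 1
    rw [Matrix.map_map]
    convert Matrix.map_id (appendCol G b)
    funext x
    simp
  have hB' : IsUnit ((A⁻¹).map ⇑α.symm) := by
    have h3 : ((A⁻¹).map ⇑α.symm) * (A.map ⇑α.symm) = 1 := by
      rw [← map_mul_equiv, Matrix.nonsing_inv_mul A hAdet]
      ext i j
      simp [Matrix.one_apply, apply_ite]
    exact ⟨⟨_, _, h3, mul_eq_one_comm.mp h3⟩, rfl⟩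
  exact ⟨N', α.symm, hN'mon, semiMap_rowSpan _ _ N' α.symm _ hB' h2⟩
end

section
/- Let C be a linear [n,k]_q code with generator matrix (A | I_k), where A ∈ F_q^{k×(n−k)}, so that (I_{n−k} | −A^T) is a generator matrix of the dual code C^⊥. Let φ = (DP, α) ∈ Aut(C), so that φ' = (D^{-1}P, α) ∈ Aut(C^⊥), and let B_φ ∈ GL(n−k, F_q) satisfy ((I_{n−k} | −A^T) D^{-1}P)^α = B_φ (I_{n−k} | −A^T). Let a, b ∈ F_q^{n−k} with b^T = (B_φ a^T)^{α^{-1}}. Then the [n+1, k+1]_q codes generated by the matrices ((A; a) | I_{k+1}) and ((A; b) | I_{k+1}), where (A; a) denotes A with the row a appended, are equivalent, via a semimonomial transformation whose underlying coordinate permutation fixes the last coordinate. -/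
open Matrix

variable {F : Type*} [Field F]

/-- The generator matrix `((A; a) | I_{k+1})`, where `(A; a)` denotes `A` with the row `a`
appended, and the identity columns are indexed by `Fin k ⊕ Unit` (the `Unit` column being
the last coordinate). -/
def extGen {k m : ℕ} (A : Matrix (Fin k) (Fin m) F) (a : Fin m → F) :
    Matrix (Fin k ⊕ Unit) ((Fin m ⊕ Fin k) ⊕ Unit) F :=
  Matrix.fromCols
    (Matrix.fromCols (Matrix.fromRows A (Matrix.of fun _ => a))
      (Matrix.fromRows (1 : Matrix (Fin k) (Fin k) F) (0 : Matrix Unit (Fin k) F)))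
    (Matrix.fromRows (0 : Matrix (Fin k) Unit F) (1 : Matrix Unit Unit F))

lemma mem_rowSpan_iff {k n : Type*} [Fintype k] [Fintype n] (G : Matrix k n F) (v : n → F) :
    v ∈ rowSpan G ↔ ∃ y, y ᵥ* G = v := by
  rw [rowSpan, show (Set.range fun i => G i) = Set.range G.row from rfl, ← range_vecMulLinear]
  simp [LinearMap.mem_range, Matrix.vecMulLinear_apply]

lemma extGen_row_inl {k m : ℕ} (A : Matrix (Fin k) (Fin m) F) (x : Fin m → F) (i : Fin k) :
    extGen A x (Sum.inl i) =
      Sum.elim (Matrix.fromCols A (1 : Matrix (Fin k) (Fin k) F) i) (fun _ => 0) := by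
  funext j
  rcases j with (j | j) | j <;>
    simp [extGen, Matrix.fromCols, Matrix.fromRows_apply_inl, Matrix.fromRows_apply_inr]

lemma extGen_row_inr {k m : ℕ} (A : Matrix (Fin k) (Fin m) F) (x : Fin m → F) (u : Unit) :
    extGen A x (Sum.inr u) = Sum.elim (Sum.elim x 0) (fun _ => 1) := by
  funext j
  rcases j with (j | j) | j <;>
    simp [extGen, Matrix.fromCols, Matrix.fromRows_apply_inl, Matrix.fromRows_apply_inr, Matrix.one_apply]

/-- membership in the extended row span -/
lemma extGen_mem {k m : ℕ} (A : Matrix (Fin k) (Fin m) F) (x : Fin m → F)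
    (w : (Fin m ⊕ Fin k) → F)
    (hw : w ∈ rowSpan (Matrix.fromCols A (1 : Matrix (Fin k) (Fin k) F))) (t : F) :
    Sum.elim (w + t • Sum.elim x 0) (fun _ => t) ∈ rowSpan (extGen A x) := by
  rw [mem_rowSpan_iff] at hw ⊢
  obtain ⟨y, hy⟩ := hw
  refine ⟨Sum.elim y (fun _ => t), ?_⟩
  funext j
  rcases j with (j | j) | j <;>
    simp [extGen, Matrix.vecMul_fromCols, Matrix.sumElim_vecMul_fromRows, ← hy,
      Matrix.vecMul_fromCols, Matrix.vecMul, dotProduct, Matrix.one_apply,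
      Finset.mul_sum, mul_comm]

/-- kernel characterization of the row span of `(A | 1)` -/
lemma mem_of_check {k m : ℕ} (A : Matrix (Fin k) (Fin m) F) (v : (Fin m ⊕ Fin k) → F)
    (hv : Matrix.fromCols (1 : Matrix (Fin m) (Fin m) F) (-Aᵀ) *ᵥ v = 0) :
    v ∈ rowSpan (Matrix.fromCols A (1 : Matrix (Fin k) (Fin k) F)) := by
  rw [mem_rowSpan_iff]
  refine ⟨fun i => v (Sum.inr i), ?_⟩
  funext j
  rcases j with j | j
  · have := congrFun hv j
    simp [Matrix.mulVec, dotProduct, Matrix.vecMul, Matrix.fromCols,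
      Matrix.one_apply, Fintype.sum_sum_type] at this ⊢
    rw [eq_comm, ← sub_eq_zero, ← this]
    ring_nf
    rw [Finset.sum_congr rfl (fun x _ => mul_comm (A x j) (v (Sum.inr x)))]
  · simp [Matrix.vecMul_fromCols, Matrix.vecMul_one]

lemma map_matmul {l n o : Type*} [Fintype n] (g : F ≃+* F) (X : Matrix l n F)
    (Y : Matrix n o F) : (X * Y).map ⇑g = X.map ⇑g * Y.map ⇑g := by
  ext i j
  simp [Matrix.mul_apply, Matrix.map_apply, map_sum]

lemma symm_vecMul_map {n : Type*} [Fintype n] (α : F ≃+* F) (N : Matrix n n F) (v : n → F) :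
    (fun j => α.symm ((v ᵥ* N.map ⇑α) j)) = (fun l => α.symm (v l)) ᵥ* N := by
  funext j
  simp [Matrix.vecMul, dotProduct, map_sum, Matrix.map_apply]

lemma apply_vecMul_eq {n o : Type*} [Fintype n] (α : F ≃+* F) (N : Matrix n o F) (v : n → F) :
    (fun j => α ((v ᵥ* N) j)) = (fun l => α (v l)) ᵥ* N.map ⇑α := by
  funext j
  simp [Matrix.vecMul, dotProduct, map_sum, Matrix.map_apply]

lemma permMatrix_mul_inv {n : Type*} [Fintype n] [DecidableEq n] (P : Equiv.Perm n) :
    (P.permMatrix F) * ((P⁻¹).permMatrix F) = 1 := by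
  rw [Equiv.Perm.permMatrix, Equiv.Perm.permMatrix, ← PEquiv.toMatrix_trans,
    ← Equiv.toPEquiv_trans]
  have : P.trans P⁻¹ = Equiv.refl _ := by
    ext x; simp
  rw [this, Equiv.toPEquiv_refl, PEquiv.toMatrix_refl]

lemma permMatrix_inv_mul {n : Type*} [Fintype n] [DecidableEq n] (P : Equiv.Perm n) :
    ((P⁻¹).permMatrix F) * (P.permMatrix F) = 1 := by
  have := permMatrix_mul_inv (F := F) P⁻¹
  simpa using this

lemma permMatrix_transpose {n : Type*} [Fintype n] [DecidableEq n] (P : Equiv.Perm n) :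
    (P.permMatrix F)ᵀ = (P⁻¹).permMatrix F := by
  rw [Equiv.Perm.permMatrix, Equiv.Perm.permMatrix, ← PEquiv.toMatrix_symm,
    ← Equiv.toPEquiv_symm]
  rfl

/-- Let `C` be the `[n,k]_q` code generated by `(A | I_k)`, so that `(I_{n-k} | -Aᵀ)`
generates `C^⊥`.  Let `φ = (DP, α) ∈ Aut(C)`, so `φ' = (D⁻¹P, α) ∈ Aut(C^⊥)`, let
`B_φ ∈ GL(n-k, F_q)` satisfy `((I_{n-k} | -Aᵀ) D⁻¹P)^α = B_φ (I_{n-k} | -Aᵀ)`, and let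
`bᵀ = (B_φ aᵀ)^{α⁻¹}`.  Then the `[n+1,k+1]_q` codes generated by `((A; a) | I_{k+1})`
and `((A; b) | I_{k+1})` are equivalent via a semimonomial transformation whose underlying
coordinate permutation fixes the last coordinate. -/
theorem stmt6 [Fintype F] {k m : ℕ}
    (A : Matrix (Fin k) (Fin m) F)
    (C : Submodule F ((Fin m ⊕ Fin k) → F))
    (hC : rowSpan (Matrix.fromCols A (1 : Matrix (Fin k) (Fin k) F)) = C)
    (d : (Fin m ⊕ Fin k) → Fˣ) (P : Equiv.Perm (Fin m ⊕ Fin k)) (α : F ≃+* F)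
    (hAut : semiMap (Matrix.diagonal (fun i => (d i : F)) * P.permMatrix F) α ''
        (C : Set ((Fin m ⊕ Fin k) → F)) = (C : Set ((Fin m ⊕ Fin k) → F)))
    (B : Matrix (Fin m) (Fin m) F) (hB : IsUnit B)
    (hBG : ((Matrix.fromCols (1 : Matrix (Fin m) (Fin m) F) (-Aᵀ)) *
          (Matrix.diagonal (fun i => (((d i)⁻¹ : Fˣ) : F)) * P.permMatrix F)).map ⇑α =
        B * Matrix.fromCols (1 : Matrix (Fin m) (Fin m) F) (-Aᵀ))
    (a b : Fin m → F)
    (hb : b = fun i => α.symm ((B *ᵥ a) i)) :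
    ∃ (M1 : Matrix (Fin m ⊕ Fin k) (Fin m ⊕ Fin k) F) (lam : Fˣ) (β : F ≃+* F),
      IsMonomial M1 ∧
      semiMap (Matrix.fromBlocks M1 0 0 (Matrix.of fun _ _ => (lam : F))) β ''
          (rowSpan (extGen A a) : Set (((Fin m ⊕ Fin k) ⊕ Unit) → F)) =
        (rowSpan (extGen A b) : Set (((Fin m ⊕ Fin k) ⊕ Unit) → F)) := by
  classical
  set G : Matrix (Fin k) (Fin m ⊕ Fin k) F :=
    Matrix.fromCols A (1 : Matrix (Fin k) (Fin k) F) with hG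
  set H : Matrix (Fin m) (Fin m ⊕ Fin k) F :=
    Matrix.fromCols (1 : Matrix (Fin m) (Fin m) F) (-Aᵀ) with hH
  set Dm : Matrix (Fin m ⊕ Fin k) (Fin m ⊕ Fin k) F :=
    Matrix.diagonal (fun i => (d i : F)) with hDm
  set Dinv : Matrix (Fin m ⊕ Fin k) (Fin m ⊕ Fin k) F :=
    Matrix.diagonal (fun i => (((d i)⁻¹ : Fˣ) : F)) with hDinv
  set Pm : Matrix (Fin m ⊕ Fin k) (Fin m ⊕ Fin k) F := P.permMatrix F with hPm
  set Pinv : Matrix (Fin m ⊕ Fin k) (Fin m ⊕ Fin k) F := (P⁻¹).permMatrix F with hPinv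
  set M : Matrix (Fin m ⊕ Fin k) (Fin m ⊕ Fin k) F := Dm * Pm with hM
  set M' : Matrix (Fin m ⊕ Fin k) (Fin m ⊕ Fin k) F := Dinv * Pm with hM'
  set Minv : Matrix (Fin m ⊕ Fin k) (Fin m ⊕ Fin k) F := Pinv * Dinv with hMinv
  set M1 : Matrix (Fin m ⊕ Fin k) (Fin m ⊕ Fin k) F := Minv.map ⇑α with hM1
  -- elementary matrix identities
  have hDD : Dm * Dinv = 1 := by
    rw [hDm, hDinv, Matrix.diagonal_mul_diagonal]
    simp [← Units.val_mul]
  have hDD' : Dinv * Dm = 1 := by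
    rw [hDm, hDinv, Matrix.diagonal_mul_diagonal]
    simp [← Units.val_mul]
  have hMMinv : M * Minv = 1 := by
    rw [hM, hMinv, mul_assoc, ← mul_assoc Pm, hPm, hPinv, permMatrix_mul_inv, one_mul, hDD]
  have hMinvT : Minvᵀ = M' := by
    rw [hMinv, Matrix.transpose_mul, hDinv, Matrix.diagonal_transpose, hPinv,
      permMatrix_transpose, inv_inv, hM']
  have hMT : Mᵀ = Pinv * Dm := by
    rw [hM, Matrix.transpose_mul, hDm, Matrix.diagonal_transpose, hPm, permMatrix_transpose,
      hPinv]
  have hM'MT : M' * Mᵀ = 1 := by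
    rw [hMT, hM', mul_assoc, ← mul_assoc Pm, hPm, hPinv, permMatrix_mul_inv, one_mul, hDD']
  -- code membership facts
  have hGC : ∀ i, G i ∈ C := by
    intro i
    rw [← hC]
    exact Submodule.subset_span ⟨i, rfl⟩
  have hCfwd : ∀ v, v ∈ C → (fun j => α ((v ᵥ* M) j)) ∈ C := by
    intro v hv
    have : semiMap M α v ∈ semiMap M α '' (C : Set _) := Set.mem_image_of_mem _ hv
    rw [hAut] at this
    exact this
  have hCbwd : ∀ v, v ∈ C → ((fun l => α.symm (v l)) ᵥ* Minv) ∈ C := by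
    intro v hv
    have hv' : v ∈ semiMap M α '' (C : Set _) := by rw [hAut]; exact hv
    obtain ⟨w, hw, hwv⟩ := hv'
    have hsv : (fun l => α.symm (v l)) = w ᵥ* M := by
      funext l
      rw [← hwv]
      exact α.symm_apply_apply _
    rw [hsv, Matrix.vecMul_vecMul, hMMinv, Matrix.vecMul_one]
    exact hw
  -- check-matrix facts
  have hHelim : ∀ x : Fin m → F, H *ᵥ (Sum.elim x 0) = x := by
    intro x
    rw [hH, Matrix.fromCols_mulVec_sumElim]
    simp
  have hHmap : ∀ (g : F ≃+* F) (x : Fin m → F),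
      (H.map ⇑g) *ᵥ (Sum.elim (fun i => g (x i)) 0) = fun i => g (x i) := by
    intro g x
    have : H.map ⇑g = Matrix.fromCols (1 : Matrix (Fin m) (Fin m) F) ((-Aᵀ).map ⇑g) := by
      ext i (j | j) <;> simp [hH, Matrix.fromCols, Matrix.one_apply, apply_ite]
    rw [this, Matrix.fromCols_mulVec_sumElim]
    simp
  have hmemC : ∀ v, H *ᵥ v = 0 → v ∈ C := by
    intro v hv
    rw [← hC]
    exact mem_of_check A v hv
  -- the two key computations
  have hF2 : ((fun l => α.symm (Sum.elim a 0 l)) ᵥ* Minv) - Sum.elim b 0 ∈ C := by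
    apply hmemC
    have hu' : (fun l => α.symm (Sum.elim a 0 l)) =
        Sum.elim (fun i => α.symm (a i)) (0 : Fin k → F) := by
      funext l; rcases l with l | l <;> simp
    have hMinv' : Minv = M'ᵀ := by rw [← hMinvT, Matrix.transpose_transpose]
    have hHM' : H * M' = B.map ⇑α.symm * H.map ⇑α.symm := by
      have h1 : ((H * M').map ⇑α).map ⇑α.symm = H * M' := by
        ext i j; rw [Matrix.map_apply, Matrix.map_apply, RingEquiv.symm_apply_apply]
      rw [hBG] at h1
      rw [← h1, ← map_matmul]
    rw [Matrix.mulVec_sub, hu', hMinv', Matrix.vecMul_transpose, Matrix.mulVec_mulVec, hHM',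
      ← Matrix.mulVec_mulVec, hHmap α.symm a, hHelim]
    have : (B.map ⇑α.symm) *ᵥ (fun i => α.symm (a i)) = b := by
      rw [hb]
      funext j
      simp [Matrix.mulVec, dotProduct, map_sum, Matrix.map_apply]
    rw [this, sub_self]
  have hF2' : (fun j => α ((Sum.elim b 0 ᵥ* M) j)) - Sum.elim a 0 ∈ C := by
    apply hmemC
    have hub : (fun l => α (Sum.elim b 0 l)) =
        Sum.elim (fun i => α (b i)) (0 : Fin k → F) := by
      funext l; rcases l with l | l <;> simp
    have hw' : (fun j => α ((Sum.elim b 0 ᵥ* M) j)) = (Mᵀ.map ⇑α) *ᵥ Sum.elim (fun i => α (b i)) 0 := by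
      calc (fun j => α ((Sum.elim b 0 ᵥ* M) j))
          = (fun l => α (Sum.elim b 0 l)) ᵥ* M.map ⇑α := apply_vecMul_eq α M _
        _ = Sum.elim (fun i => α (b i)) 0 ᵥ* (Mᵀ.map ⇑α)ᵀ := by
            rw [hub, Matrix.transpose_map, Matrix.transpose_transpose]
        _ = (Mᵀ.map ⇑α) *ᵥ Sum.elim (fun i => α (b i)) 0 := Matrix.vecMul_transpose _ _
    have hBHM : B * H * (Mᵀ.map ⇑α) = H.map ⇑α := by
      rw [← hBG, ← map_matmul, Matrix.mul_assoc, hM'MT, Matrix.mul_one]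
    obtain ⟨U, hU⟩ := hB
    have hcan : H *ᵥ ((fun j => α ((Sum.elim b 0 ᵥ* M) j))) = a := by
      have h2 : B *ᵥ (H *ᵥ ((fun j => α ((Sum.elim b 0 ᵥ* M) j)))) = B *ᵥ a := by
        rw [hw', Matrix.mulVec_mulVec, Matrix.mulVec_mulVec, hBHM, hHmap α b]
        funext j
        rw [hb]
        simp
      have h3 := congrArg (fun z => (↑U⁻¹ : Matrix (Fin m) (Fin m) F) *ᵥ z) h2
      have h4 : ((↑U⁻¹ : Matrix (Fin m) (Fin m) F) * B) = 1 := by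
        rw [← hU, ← Units.val_mul, inv_mul_cancel, Units.val_one]
      simp only [Matrix.mulVec_mulVec, h4, Matrix.one_mulVec] at h3
      rw [← Matrix.mul_assoc, h4, Matrix.one_mul] at h3
      exact h3
    rw [Matrix.mulVec_sub, hcan, hHelim, sub_self]
    -- the semilinear map
  let BIGM : Matrix ((Fin m ⊕ Fin k) ⊕ Unit) ((Fin m ⊕ Fin k) ⊕ Unit) F :=
    Matrix.fromBlocks M1 0 0 (Matrix.of fun _ _ => ((1 : Fˣ) : F))
  let f : (((Fin m ⊕ Fin k) ⊕ Unit) → F) →ₛₗ[(α.symm : F →+* F)]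
      (((Fin m ⊕ Fin k) ⊕ Unit) → F) :=
    { toFun := semiMap BIGM α.symm
      map_add' := by
        intro v w
        funext j
        simp [semiMap, Matrix.add_vecMul, map_add]
      map_smul' := by
        intro c v
        funext j
        simp [semiMap, Matrix.smul_vecMul, smul_eq_mul, _root_.map_mul] }
  have hf : ∀ (w : (Fin m ⊕ Fin k) → F) (t : F),
      f (Sum.elim w (fun _ => t)) =
        Sum.elim ((fun l => α.symm (w l)) ᵥ* Minv) (fun _ => α.symm t) := by
    intro w t
    have hv : Sum.elim w (fun _ => t) ᵥ* BIGM = Sum.elim (w ᵥ* M1) (fun _ => t) := by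
      rw [show BIGM = Matrix.fromBlocks M1 0 0 (Matrix.of fun _ _ => ((1 : Fˣ) : F)) from rfl,
        Matrix.vecMul_fromBlocks]
      funext j
      rcases j with j | j
      · simp [Sum.elim_comp_inl, Sum.elim_comp_inr, Matrix.vecMul, dotProduct]
      · simp [Sum.elim_comp_inl, Sum.elim_comp_inr, Matrix.vecMul, dotProduct]
    funext j
    show α.symm ((Sum.elim w (fun _ => t) ᵥ* BIGM) j) = _
    rw [hv]
    rcases j with j | j
    · show α.symm ((w ᵥ* M1) j) = ((fun l => α.symm (w l)) ᵥ* Minv) j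
      rw [hM1]
      exact congrFun (symm_vecMul_map α Minv w) j
    · rfl
  -- monomiality
  have hMono : IsMonomial M1 := by
    refine ⟨fun i => Units.map (α.toRingHom.toMonoidHom) ((d (P⁻¹ i))⁻¹), P⁻¹, ?_⟩
    have e1 : Pinv * Dinv = Dinv.submatrix (⇑(P⁻¹ : Equiv.Perm (Fin m ⊕ Fin k))) id :=
      PEquiv.toMatrix_toPEquiv_mul _ _
    have e2 : Matrix.diagonal (fun i => ((Units.map (α.toRingHom.toMonoidHom)
          ((d (P⁻¹ i))⁻¹) : Fˣ) : F)) * (P⁻¹ : Equiv.Perm (Fin m ⊕ Fin k)).permMatrix F =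
        (Matrix.diagonal (fun i => ((Units.map (α.toRingHom.toMonoidHom)
          ((d (P⁻¹ i))⁻¹) : Fˣ) : F))).submatrix id ⇑((P⁻¹ : Equiv.Perm (Fin m ⊕ Fin k)).symm) :=
      PEquiv.mul_toMatrix_toPEquiv _ _
    rw [hM1, hMinv, e1, e2]
    ext i j
    rw [Matrix.map_apply, Matrix.submatrix_apply, Matrix.submatrix_apply, hDinv]
    simp only [id_eq]
    by_cases h : (P⁻¹ : Equiv.Perm (Fin m ⊕ Fin k)) i = j
    · have h' : ((P⁻¹ : Equiv.Perm (Fin m ⊕ Fin k)).symm) j = i := by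
        rw [← h]; exact Equiv.symm_apply_apply _ _
      rw [h, Matrix.diagonal_apply_eq, h', Matrix.diagonal_apply_eq]
      simp [h, Units.coe_map]
    · have h' : ¬ (i = ((P⁻¹ : Equiv.Perm (Fin m ⊕ Fin k)).symm) j) := by
        intro hh
        exact h (by rw [hh]; simp)
      rw [Matrix.diagonal_apply_ne _ h, Matrix.diagonal_apply_ne _ h', map_zero]
  refine ⟨M1, 1, α.symm, hMono, ?_⟩
  have hsm : semiMap (Matrix.fromBlocks M1 0 0
      (Matrix.of fun _ _ => (((1 : Fˣ) : F)))) α.symm = ⇑f := rfl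
  have hmain : Submodule.map f (rowSpan (extGen A a)) = rowSpan (extGen A b) := by
    apply le_antisymm
    · rw [rowSpan, Submodule.map_span, Submodule.span_le]
      rintro _ ⟨_, ⟨i, rfl⟩, rfl⟩
      rcases i with i | u
      · show f (extGen A a (Sum.inl i)) ∈ (rowSpan (extGen A b) : Set _)
        rw [extGen_row_inl, hf]
        have hm : (fun l => α.symm (G i l)) ᵥ* Minv ∈ rowSpan G := by
          rw [hC]; exact hCbwd (G i) (hGC i)
        have := extGen_mem A b _ hm 0
        simpa using this
      · show f (extGen A a (Sum.inr u)) ∈ (rowSpan (extGen A b) : Set _)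
        rw [extGen_row_inr, hf]
        have hm : ((fun l => α.symm (Sum.elim a 0 l)) ᵥ* Minv) - Sum.elim b 0 ∈ rowSpan G := by
          rw [hC]; exact hF2
        have := extGen_mem A b _ hm 1
        simpa [sub_add_cancel] using this
    · rw [show rowSpan (extGen A b) =
          Submodule.span F (Set.range fun i => extGen A b i) from rfl, Submodule.span_le]
      rintro _ ⟨i, rfl⟩
      rcases i with i | u
      · show extGen A b (Sum.inl i) ∈ Submodule.map f (rowSpan (extGen A a))
        refine Submodule.mem_map.mpr
          ⟨Sum.elim (fun j => α ((G i ᵥ* M) j)) (fun _ => 0), ?_, ?_⟩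
        · have hm : (fun j => α ((G i ᵥ* M) j)) ∈ rowSpan G := by
            rw [hC]; exact hCfwd (G i) (hGC i)
          have := extGen_mem A a _ hm 0
          simpa using this
        · rw [hf]
          have h5 : (fun l => α.symm (α ((G i ᵥ* M) l))) = G i ᵥ* M :=
            funext fun l => α.symm_apply_apply _
          rw [h5, Matrix.vecMul_vecMul, hMMinv, Matrix.vecMul_one, extGen_row_inl]
          funext j
          rcases j with j | j <;> simp [hG]
      · show extGen A b (Sum.inr u) ∈ Submodule.map f (rowSpan (extGen A a))
        refine Submodule.mem_map.mpr
          ⟨Sum.elim (fun j => α ((Sum.elim b 0 ᵥ* M) j)) (fun _ => 1), ?_, ?_⟩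
        · have hm : (fun j => α ((Sum.elim b 0 ᵥ* M) j)) - Sum.elim a 0 ∈ rowSpan G := by
            rw [hC]; exact hF2'
          have := extGen_mem A a _ hm 1
          simpa [sub_add_cancel] using this
        · rw [hf]
          have h5 : (fun l => α.symm (α ((Sum.elim b 0 ᵥ* M) l))) = Sum.elim b 0 ᵥ* M :=
            funext fun l => α.symm_apply_apply _
          rw [h5, Matrix.vecMul_vecMul, hMMinv, Matrix.vecMul_one, extGen_row_inr]
          funext j
          rcases j with j | j <;> simp
  rw [hsm, ← hmain]
  exact (Submodule.map_coe f _).symm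
end

section
/- Let W ⊆ ℕ_{≥1} and let C' be a linear [n',k']_q code of effective length n' all of whose nonzero codewords have Hamming weight in W, with a generator matrix G' containing a column g' of multiplicity r ≥ 1 (i.e., exactly r columns of G' span the point ⟨g'⟩). Then there exists a linear code C of effective length n'−r and dimension k'−1, all of whose nonzero codewords have weight in W, such that C' is equivalent to the code generated by a block matrix [[Ĝ, 0],[a, 1⋯1]], where Ĝ ∈ F_q^{(k'−1)×(n'−r)} is a generator matrix of C, a ∈ F_q^{n'−r}, and the last block consists of r columns. Moreover, if Λ is the maximum multiplicity among columns of G' whose span differs from ⟨g'⟩, then the maximum column multiplicity of (a generator matrix of) C is at least Λ. -/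
open Matrix

variable {F : Type*} [Field F]

/-- The multiplicity of the column `j0` of `G`: the number of columns of `G` whose span
equals the span of column `j0`. -/
noncomputable def colMult {m n : Type*} [Fintype n] (G : Matrix m n F) (j0 : n) : ℕ :=
  Nat.card {j : n // Submodule.span F {fun i => G i j} =
    Submodule.span F {fun i => G i j0}}

/-- A semimonomial transformation (coordinate relabeling `e`, nonzero scalars `d`, field
automorphism `α`) acting by `v ↦ ((v ∘ e⁻¹) ⬝ d)^α`. -/
def monMap {n1 n2 : Type*} (e : n1 ≃ n2) (d : n2 → Fˣ) (α : F ≃+* F) (v : n1 → F) :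
    n2 → F :=
  fun j => α ((d j : F) * v (e.symm j))

/-- Two linear codes are equivalent if some semimonomial transformation maps one onto
the other. -/
def CodeEquivR {n1 n2 : Type*} (C1 : Submodule F (n1 → F)) (C2 : Submodule F (n2 → F)) :
    Prop :=
  ∃ (e : n1 ≃ n2) (d : n2 → Fˣ) (α : F ≃+* F),
    monMap e d α '' (C1 : Set (n1 → F)) = (C2 : Set (n2 → F))

/-- The block matrix `[[Gres, 0], [a, 1⋯1]]` with `r` columns in the last block. -/
def extBlock {k m r : ℕ} (Gres : Matrix (Fin k) (Fin m) F) (a : Fin m → F) :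
    Matrix (Fin k ⊕ Unit) (Fin m ⊕ Fin r) F :=
  Matrix.fromBlocks Gres 0 (Matrix.of fun _ j => a j) (Matrix.of fun _ _ => (1 : F))

/-- Lemma 6.  If `C'` is an `[n',k']_q` code with all nonzero weights in `W ⊆ ℕ_{≥1}`,
with a generator matrix `G'` containing a column `g'` of multiplicity `r ≥ 1`, then there
is an `[n'-r, k'-1, W]_q` code `C` with generator matrix `Gres` such that `C'` is equivalent
to the code generated by `[[Gres, 0], [a, 1⋯1]]`.  Moreover, if `Λ` is the maximum
multiplicity among the columns of `G'` whose span differs from `⟨g'⟩`, then the maximum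
column multiplicity of `Gres` is at least `Λ`. -/
theorem stmt8 [Fintype F] [DecidableEq F] {n' k' r : ℕ} (W : Set ℕ)
    (hW : ∀ w ∈ W, 1 ≤ w)
    (C' : Submodule F (Fin n' → F)) (hdim : Module.finrank F C' = k')
    (heff : ∀ j, ∃ c ∈ C', c j ≠ 0)
    (hw : ∀ c ∈ C', c ≠ 0 → hammingNorm c ∈ W)
    (G' : Matrix (Fin k') (Fin n') F) (hG' : rowSpan G' = C')
    (j0 : Fin n') (hr : 1 ≤ r) (hmult : colMult G' j0 = r) :
    ∃ (C : Submodule F (Fin (n' - r) → F))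
      (Gres : Matrix (Fin (k' - 1)) (Fin (n' - r)) F) (aa : Fin (n' - r) → F),
      rowSpan Gres = C ∧
      Module.finrank F C = k' - 1 ∧
      (∀ j, ∃ c ∈ C, c j ≠ 0) ∧
      (∀ c ∈ C, c ≠ 0 → hammingNorm c ∈ W) ∧
      CodeEquivR C' (rowSpan (extBlock (r := r) Gres aa)) ∧
      (∀ Λ : ℕ,
        (∀ j, Submodule.span F {fun i => G' i j} ≠ Submodule.span F {fun i => G' i j0} →
          colMult G' j ≤ Λ) →
        (∃ j, Submodule.span F {fun i => G' i j} ≠ Submodule.span F {fun i => G' i j0} ∧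
          colMult G' j = Λ) →
        ∃ j2 : Fin (n' - r), Λ ≤ colMult Gres j2) := by
  classical
  -- every column of `G'` has a nonzero entry
  have hcol : ∀ j : Fin n', ∃ i, G' i j ≠ 0 := by
    intro j
    by_contra h
    push_neg at h
    obtain ⟨c, hc, hcj⟩ := heff j
    rw [← hG'] at hc
    have hle : rowSpan G' ≤ LinearMap.ker (LinearMap.proj (R := F) (φ := fun _ : Fin n' => F) j) := by
      rw [rowSpan, Submodule.span_le]
      rintro _ ⟨i, rfl⟩
      simp [LinearMap.mem_ker, h i]
    have : c j = 0 := by simpa using hle hc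
    exact hcj this
  obtain ⟨i0, hi0⟩ := hcol j0
  -- the row-reduced generator matrix `B`
  obtain ⟨B, hBspan, hA, hB2, M, hM⟩ :
      ∃ B : Matrix (Fin k') (Fin n') F,
        rowSpan B = rowSpan G' ∧
        (∀ j, Submodule.span F {fun i => G' i j} = Submodule.span F {fun i => G' i j0} →
          ∃ c : F, c ≠ 0 ∧ ∀ i, B i j = if i = i0 then c else 0) ∧
        (∀ j, Submodule.span F {fun i => G' i j} ≠ Submodule.span F {fun i => G' i j0} →
          ∃ i, i ≠ i0 ∧ B i j ≠ 0) ∧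
        ∃ M : (Fin k' → F) →ₗ[F] (Fin k' → F),
          ∀ j, (fun i => B i j) = M (fun i => G' i j) := by
    refine ⟨fun i j => if i = i0 then (G' i0 j0)⁻¹ * G' i0 j
        else G' i j - (G' i j0 * (G' i0 j0)⁻¹) * G' i0 j, ?_, ?_, ?_, ?_⟩
    · apply le_antisymm
      · unfold rowSpan
        rw [Submodule.span_le]
        rintro _ ⟨i, rfl⟩
        beta_reduce
        by_cases h : i = i0
        · have heq : (fun j => if i = i0 then (G' i0 j0)⁻¹ * G' i0 j
              else G' i j - (G' i j0 * (G' i0 j0)⁻¹) * G' i0 j) = (G' i0 j0)⁻¹ • G' i0 := by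
            funext j
            rw [Pi.smul_apply, smul_eq_mul, if_pos h]
          rw [heq]
          exact Submodule.smul_mem _ _ (Submodule.subset_span ⟨i0, rfl⟩)
        · have heq : (fun j => if i = i0 then (G' i0 j0)⁻¹ * G' i0 j
              else G' i j - (G' i j0 * (G' i0 j0)⁻¹) * G' i0 j)
              = G' i - (G' i j0 * (G' i0 j0)⁻¹) • G' i0 := by
            funext j
            rw [Pi.sub_apply, Pi.smul_apply, smul_eq_mul, if_neg h]
          rw [heq]
          exact Submodule.sub_mem _ (Submodule.subset_span ⟨i, rfl⟩)
            (Submodule.smul_mem _ _ (Submodule.subset_span ⟨i0, rfl⟩))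
      · rw [rowSpan, Submodule.span_le]
        rintro _ ⟨i, rfl⟩
        beta_reduce
        by_cases h : i = i0
        · have heq : G' i = G' i0 j0 • (fun j => if i = i0 then (G' i0 j0)⁻¹ * G' i0 j
              else G' i j - (G' i j0 * (G' i0 j0)⁻¹) * G' i0 j) := by
            funext j
            rw [Pi.smul_apply, smul_eq_mul, if_pos h, h, ← mul_assoc,
              mul_inv_cancel₀ hi0, one_mul]
          rw [heq]
          exact Submodule.smul_mem _ _ (Submodule.subset_span ⟨i, rfl⟩)
        · have heq : G' i = (fun j => if i = i0 then (G' i0 j0)⁻¹ * G' i0 j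
              else G' i j - (G' i j0 * (G' i0 j0)⁻¹) * G' i0 j)
              + G' i j0 • (fun j => if (i0 : Fin k') = i0 then (G' i0 j0)⁻¹ * G' i0 j
              else G' i0 j - (G' i0 j0 * (G' i0 j0)⁻¹) * G' i0 j) := by
            funext j
            rw [Pi.add_apply, Pi.smul_apply, smul_eq_mul, if_pos rfl, if_neg h,
              show G' i j0 * ((G' i0 j0)⁻¹ * G' i0 j)
                = (G' i j0 * (G' i0 j0)⁻¹) * G' i0 j from by ring]
            ring
          rw [heq]
          exact Submodule.add_mem _ (Submodule.subset_span ⟨i, rfl⟩)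
            (Submodule.smul_mem _ _ (Submodule.subset_span ⟨i0, rfl⟩))
    · intro j hspan
      have hmem : (fun i => G' i j) ∈ Submodule.span F {fun i => G' i j0} := by
        rw [← hspan]; exact Submodule.mem_span_singleton_self _
      obtain ⟨a, ha⟩ := Submodule.mem_span_singleton.mp hmem
      have haj : ∀ i, G' i j = a * G' i j0 := fun i => (congrFun ha i).symm
      have ha0 : a ≠ 0 := by
        rintro rfl
        have hz : (fun i => G' i j) = (0 : Fin k' → F) := by
          funext i; simp [haj i]
        rw [hz, Submodule.span_zero_singleton] at hspan
        have hb : (fun i => G' i j0) ∈ (⊥ : Submodule F (Fin k' → F)) := by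
          rw [hspan]; exact Submodule.mem_span_singleton_self _
        rw [Submodule.mem_bot] at hb
        exact hi0 (congrFun hb i0)
      refine ⟨a, ha0, fun i => ?_⟩
      beta_reduce
      by_cases h : i = i0
      · rw [if_pos h, if_pos h, haj i0, mul_comm a, ← mul_assoc,
          inv_mul_cancel₀ hi0, one_mul]
      · rw [if_neg h, if_neg h, haj i, haj i0,
          show (G' i j0 * (G' i0 j0)⁻¹) * (a * G' i0 j0)
            = a * G' i j0 * ((G' i0 j0)⁻¹ * G' i0 j0) from by ring,
          inv_mul_cancel₀ hi0, mul_one, sub_self]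
    · intro j hne
      by_contra hcon
      push_neg at hcon
      apply hne
      have haj : ∀ i, G' i j = ((G' i0 j0)⁻¹ * G' i0 j) * G' i j0 := by
        intro i
        by_cases h : i = i0
        · rw [h, show ((G' i0 j0)⁻¹ * G' i0 j) * G' i0 j0
              = G' i0 j * ((G' i0 j0)⁻¹ * G' i0 j0) from by ring,
            inv_mul_cancel₀ hi0, mul_one]
        · have h1 := hcon i h
          beta_reduce at h1
          rw [if_neg h] at h1
          have h2 := sub_eq_zero.mp h1
          rw [h2]; ring
      have ha0 : (G' i0 j0)⁻¹ * G' i0 j ≠ 0 := by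
        intro h0
        obtain ⟨i, hi⟩ := hcol j
        exact hi (by rw [haj i, h0, zero_mul])
      have hcolj : (fun i => G' i j) = ((G' i0 j0)⁻¹ * G' i0 j) • (fun i => G' i j0) := by
        funext i; rw [haj i]; simp [mul_comm]
      rw [hcolj]
      exact Submodule.span_singleton_smul_eq (IsUnit.mk0 _ ha0) _
    · exact ⟨(⟨⟨fun u i => if i = i0 then (G' i0 j0)⁻¹ * u i0
          else u i - (G' i j0 * (G' i0 j0)⁻¹) * u i0, by
            intro u v
            funext i
            by_cases h : i = i0 <;> simp [h] <;> ring⟩, by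
            intro a u
            funext i
            by_cases h : i = i0 <;> simp [h] <;> ring⟩ :
          (Fin k' → F) →ₗ[F] (Fin k' → F)), fun j => rfl⟩
  -- the rows of `B` are linearly independent
  have hBli : LinearIndependent F (fun i => B i) := by
    rw [linearIndependent_iff_card_eq_finrank_span]
    show Fintype.card (Fin k')
      = Module.finrank F (Submodule.span F (Set.range fun i => B i))
    have hspanC : Submodule.span F (Set.range fun i => B i) = C' := by
      rw [← hG', ← hBspan]; rfl
    rw [Fintype.card_fin, hspanC, hdim]
  -- cardinalities
  have hPcard : Fintype.card {j : Fin n' // Submodule.span F {fun i => G' i j}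
      = Submodule.span F {fun i => G' i j0}} = r := by
    rw [← Nat.card_eq_fintype_card]; exact hmult
  have hNcard : Fintype.card {j : Fin n' // ¬ (Submodule.span F {fun i => G' i j}
      = Submodule.span F {fun i => G' i j0})} = n' - r := by
    rw [Fintype.card_subtype_compl, hPcard, Fintype.card_fin]
  -- the injection of residual row indices
  obtain ⟨emb, hembne, hembinj, hembsurj⟩ :
      ∃ emb : Fin (k' - 1) → Fin k', (∀ m, emb m ≠ i0) ∧ Function.Injective emb ∧
        ∀ i, i ≠ i0 → ∃ m, emb m = i := by
    have hcard : Fintype.card {i : Fin k' // ¬ (i = i0)} = k' - 1 := by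
      rw [Fintype.card_subtype_compl, Fintype.card_subtype_eq, Fintype.card_fin]
    have eR := Fintype.equivFinOfCardEq hcard
    refine ⟨fun m => (eR.symm m).1, fun m => (eR.symm m).2, ?_, ?_⟩
    · intro a b hab
      have : eR.symm a = eR.symm b := Subtype.ext hab
      exact eR.symm.injective this
    · intro i hi
      exact ⟨eR ⟨i, hi⟩, by simp⟩
  -- the column equivalence
  obtain ⟨e, he1, he2⟩ :
      ∃ e : Fin n' ≃ (Fin (n' - r) ⊕ Fin r),
        (∀ jj : Fin (n' - r), ¬ (Submodule.span F {fun i => G' i (e.symm (Sum.inl jj))}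
          = Submodule.span F {fun i => G' i j0})) ∧
        (∀ jj2 : Fin r, Submodule.span F {fun i => G' i (e.symm (Sum.inr jj2))}
          = Submodule.span F {fun i => G' i j0}) := by
    have eN := Fintype.equivFinOfCardEq hNcard
    have eP := Fintype.equivFinOfCardEq hPcard
    refine ⟨((Equiv.sumCompl _).symm.trans (Equiv.sumComm _ _)).trans
      (Equiv.sumCongr eN eP), ?_, ?_⟩
    · intro jj
      have heval : (((Equiv.sumCompl _).symm.trans (Equiv.sumComm _ _)).trans
          (Equiv.sumCongr eN eP)).symm (Sum.inl jj) = (eN.symm jj).1 := by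
        simp
      rw [heval]
      exact (eN.symm jj).2
    · intro jj2
      have heval : (((Equiv.sumCompl _).symm.trans (Equiv.sumComm _ _)).trans
          (Equiv.sumCongr eN eP)).symm (Sum.inr jj2) = (eP.symm jj2).1 := by
        simp
      rw [heval]
      exact (eP.symm jj2).2
  have hetot : ∀ j : Fin n',
      Submodule.span F {fun i => G' i j} ≠ Submodule.span F {fun i => G' i j0} →
      ∃ jj, e.symm (Sum.inl jj) = j := by
    intro j hj
    rcases h : e j with jj | jj2
    · exact ⟨jj, by rw [← h, Equiv.symm_apply_apply]⟩
    · exfalso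
      apply hj
      have := he2 jj2
      rwa [← h, Equiv.symm_apply_apply] at this
  -- helper computations
  have hsumval : ∀ (x : Fin (k' - 1) → F) (j : Fin n'),
      (∑ m, x m • B (emb m)) j = ∑ m, x m * B (emb m) j := by
    intro x j
    simp [Finset.sum_apply]
  have hyPzero : ∀ (x : Fin (k' - 1) → F) (j : Fin n'),
      Submodule.span F {fun i => G' i j} = Submodule.span F {fun i => G' i j0} →
      (∑ m, x m • B (emb m)) j = 0 := by
    intro x j hj
    obtain ⟨c, hc0, hc⟩ := hA j hj
    rw [hsumval]
    apply Finset.sum_eq_zero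
    intro m _
    rw [hc (emb m), if_neg (hembne m), mul_zero]
  have hymem : ∀ x : Fin (k' - 1) → F, (∑ m, x m • B (emb m)) ∈ C' := by
    intro x
    rw [← hG', ← hBspan]
    exact Submodule.sum_mem _ fun m _ =>
      Submodule.smul_mem _ _ (Submodule.subset_span ⟨emb m, rfl⟩)
  refine ⟨_, (fun m jj => B (emb m) (e.symm (Sum.inl jj))),
    (fun jj => B i0 (e.symm (Sum.inl jj))), rfl, ?_, ?_, ?_, ?_, ?_⟩
  · -- dimension
    have hli : LinearIndependent F (fun m (jj : Fin (n' - r)) => B (emb m) (e.symm (Sum.inl jj))) := by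
      rw [Fintype.linearIndependent_iff]
      intro g hg m
      have hy : (∑ m, g m • B (emb m)) = 0 := by
        funext j
        show (∑ m, g m • B (emb m)) j = 0
        by_cases hj : Submodule.span F {fun i => G' i j} = Submodule.span F {fun i => G' i j0}
        · exact hyPzero g j hj
        · obtain ⟨jj, hjj⟩ := hetot j hj
          rw [← hjj, hsumval]
          have := congrFun hg jj
          simpa [Finset.sum_apply] using this
      exact (Fintype.linearIndependent_iff.mp (hBli.comp emb hembinj)) g (by exact hy) m
    have hfr := finrank_span_eq_card hli
    rw [Fintype.card_fin] at hfr
    exact hfr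
  · -- effective length
    intro jj
    obtain ⟨i, hine, hBne⟩ := hB2 _ (he1 jj)
    obtain ⟨m, hm⟩ := hembsurj i hine
    refine ⟨(fun jj' => B (emb m) (e.symm (Sum.inl jj'))),
      Submodule.subset_span ⟨m, rfl⟩, ?_⟩
    rw [hm]
    exact hBne
  · -- weights
    intro c hc hc0
    have hc' : c ∈ Submodule.span F
        (Set.range fun m => (fun jj => B (emb m) (e.symm (Sum.inl jj)))) := hc
    rw [Submodule.mem_span_range_iff_exists_fun] at hc'
    obtain ⟨x, hx⟩ := hc'
    have hyval : ∀ jj, (∑ m, x m • B (emb m)) (e.symm (Sum.inl jj)) = c jj := by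
      intro jj
      rw [hsumval, ← hx]
      simp [Finset.sum_apply]
    have hy0 : (∑ m, x m • B (emb m)) ≠ 0 := by
      intro h
      apply hc0
      funext jj
      rw [← hyval jj, h]
      rfl
    have hnorm : hammingNorm c = hammingNorm (∑ m, x m • B (emb m)) := by
      unfold hammingNorm
      refine Finset.card_bij (fun jj _ => e.symm (Sum.inl jj)) ?_ ?_ ?_
      · intro jj hjj
        simp only [Finset.mem_filter, Finset.mem_univ, true_and] at hjj ⊢
        rw [hyval]
        exact hjj
      · intro a _ b _ hab
        exact Sum.inl.inj (e.symm.injective hab)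
      · intro j hj
        simp only [Finset.mem_filter, Finset.mem_univ, true_and] at hj
        have hjne : Submodule.span F {fun i => G' i j} ≠ Submodule.span F {fun i => G' i j0} :=
          fun hP => hj (hyPzero x j hP)
        obtain ⟨jj, hjj⟩ := hetot j hjne
        refine ⟨jj, ?_, hjj⟩
        simp only [Finset.mem_filter, Finset.mem_univ, true_and]
        rw [← hyval jj, hjj]
        exact hj
    rw [hnorm]
    exact hw _ (hymem x) hy0
  · -- code equivalence
    choose cS hcS0 hcSB using fun (s : {j : Fin n' // Submodule.span F {fun i => G' i j}
        = Submodule.span F {fun i => G' i j0}}) => hA s.1 s.2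
    obtain ⟨d, hd1, hd2⟩ : ∃ d : (Fin (n' - r) ⊕ Fin r) → Fˣ,
        (∀ jj, (d (Sum.inl jj) : F) = 1) ∧
        (∀ jj2, (d (Sum.inr jj2) : F) = (cS ⟨e.symm (Sum.inr jj2), he2 jj2⟩)⁻¹) := by
      refine ⟨Sum.elim (fun _ => 1)
        (fun jj2 => (Units.mk0 _ (hcS0 ⟨e.symm (Sum.inr jj2), he2 jj2⟩))⁻¹), fun _ => rfl, fun jj2 => ?_⟩
      simp
    obtain ⟨L, hL⟩ : ∃ L : (Fin n' → F) →ₗ[F] ((Fin (n' - r) ⊕ Fin r) → F),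
        ∀ v, L v = monMap e d (RingEquiv.refl F) v := by
      refine ⟨(⟨⟨fun v j2 => (d j2 : F) * v (e.symm j2), by
          intro u v
          funext j2
          simp [mul_add]⟩, by
          intro a v
          funext j2
          simp
          ring⟩ : (Fin n' → F) →ₗ[F] ((Fin (n' - r) ⊕ Fin r) → F)), fun v => ?_⟩
      funext j2
      simp [monMap]
    choose minv hminv using hembsurj
    obtain ⟨ι, hιsurj, hκ⟩ : ∃ ι : Fin k' → (Fin (k' - 1) ⊕ Unit), Function.Surjective ι ∧
        ∀ i, L (B i) = extBlock (r := r) (fun m jj => B (emb m) (e.symm (Sum.inl jj)))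
          (fun jj => B i0 (e.symm (Sum.inl jj))) (ι i) := by
      refine ⟨fun i => if h : i = i0 then Sum.inr () else Sum.inl (minv i h), ?_, ?_⟩
      · rintro (m | u)
        · refine ⟨emb m, ?_⟩
          beta_reduce
          rw [dif_neg (hembne m)]
          exact congrArg Sum.inl (hembinj (hminv _ _))
        · exact ⟨i0, by beta_reduce; rw [dif_pos rfl]⟩
      · intro i
        funext j2
        rw [hL]
        rcases j2 with jj | jj2
        · show (d (Sum.inl jj) : F) * B i (e.symm (Sum.inl jj)) = _
          beta_reduce
          rw [hd1, one_mul]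
          by_cases h : i = i0
          · subst h
            rw [dif_pos rfl]
            simp [extBlock]
            rfl
          · rw [dif_neg h]
            simp only [extBlock, Matrix.fromBlocks_apply₁₁]
            exact (congrArg (fun t => B t (e.symm (Sum.inl jj))) (hminv i h)).symm
        · show (d (Sum.inr jj2) : F) * B i (e.symm (Sum.inr jj2)) = _
          beta_reduce
          rw [hd2, hcSB ⟨e.symm (Sum.inr jj2), he2 jj2⟩ i]
          by_cases h : i = i0
          · subst h
            rw [if_pos rfl, dif_pos rfl,
              inv_mul_cancel₀ (hcS0 ⟨e.symm (Sum.inr jj2), he2 jj2⟩)]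
            simp [extBlock]
            rfl
          · rw [if_neg h, dif_neg h, mul_zero]
            simp [extBlock]
            rfl
    refine ⟨e, d, RingEquiv.refl F, ?_⟩
    have himg : monMap e d (RingEquiv.refl F) '' (C' : Set (Fin n' → F)) = ⇑L '' (C' : Set (Fin n' → F)) := by
      apply Set.image_congr
      intro v _
      rw [hL]
    rw [himg]
    have hmain : Submodule.map L C'
        = rowSpan (extBlock (r := r) (fun m jj => B (emb m) (e.symm (Sum.inl jj)))
          (fun jj => B i0 (e.symm (Sum.inl jj)))) := by
      rw [← hG', ← hBspan, rowSpan, Submodule.map_span, rowSpan]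
      congr 1
      rw [← Set.range_comp]
      have : (⇑L ∘ fun i => B i)
          = (fun i => extBlock (r := r) (fun m jj => B (emb m) (e.symm (Sum.inl jj)))
            (fun jj => B i0 (e.symm (Sum.inl jj))) (ι i)) := by
        funext i
        exact hκ i
      rw [this]
      exact hιsurj.range_comp _
    rw [← hmain]
    exact (Submodule.map_coe L C').symm
  · -- multiplicities
    intro Λ _ hex
    obtain ⟨j, hjne, hjΛ⟩ := hex
    obtain ⟨jj, hjj⟩ := hetot j hjne
    refine ⟨jj, ?_⟩
    have hcolGres : ∀ (j' : Fin n') (jj' : Fin (n' - r)), e.symm (Sum.inl jj') = j' →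
        (fun m => B (emb m) (e.symm (Sum.inl jj')))
          = ((LinearMap.funLeft F F emb).comp M) (fun i => G' i j') := by
      intro j' jj' hj'
      funext m
      rw [hj']
      rw [LinearMap.comp_apply, LinearMap.funLeft_apply]
      exact congrFun (hM j') (emb m)
    have hspan : ∀ j2 : Fin n',
        Submodule.span F {fun i => G' i j2} = Submodule.span F {fun i => G' i j} →
        ∃ jj2, e.symm (Sum.inl jj2) = j2 ∧
          Submodule.span F {(fun m => B (emb m) (e.symm (Sum.inl jj2)))}
            = Submodule.span F {(fun m => B (emb m) (e.symm (Sum.inl jj)))} := by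
      intro j2 h2
      have hj2ne : Submodule.span F {fun i => G' i j2} ≠ Submodule.span F {fun i => G' i j0} := by
        rw [h2]; exact hjne
      obtain ⟨jj2, hjj2⟩ := hetot j2 hj2ne
      refine ⟨jj2, hjj2, ?_⟩
      rw [hcolGres j2 jj2 hjj2, hcolGres j jj hjj]
      rw [← Set.image_singleton, ← Set.image_singleton, ← Submodule.map_span,
        ← Submodule.map_span, h2]
    choose f hf1 hf2 using fun (s : {j2 : Fin n' // Submodule.span F {fun i => G' i j2}
        = Submodule.span F {fun i => G' i j}}) => hspan s.1 s.2
    have hinj : Function.Injective (fun s : {j2 : Fin n' // Submodule.span F {fun i => G' i j2}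
        = Submodule.span F {fun i => G' i j}} =>
        (⟨f s, hf2 s⟩ : {jj2 : Fin (n' - r) //
          Submodule.span F {(fun m => B (emb m) (e.symm (Sum.inl jj2)))}
            = Submodule.span F {(fun m => B (emb m) (e.symm (Sum.inl jj)))}})) := by
      intro s1 s2 h12
      have hfe : f s1 = f s2 := congrArg Subtype.val h12
      apply Subtype.ext
      rw [← hf1 s1, ← hf1 s2, hfe]
    calc Λ = colMult G' j := hjΛ.symm
    _ ≤ colMult (fun m jj' => B (emb m) (e.symm (Sum.inl jj'))) jj :=
        Nat.card_le_card_of_injective _ hinj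
end

section
/- Let W ⊆ ℕ_{≥1} and let C' be a linear [n',k']_q code of effective length n', all of whose nonzero codewords have Hamming weight in W, and let r be the minimum column multiplicity of a generator matrix of C'. Then there exists a linear code C of effective length n'−r and dimension k'−1, all of whose nonzero codewords have weight in W and whose minimum column multiplicity is at least r, such that C' is equivalent to the code generated by a block matrix [[Ĝ, 0],[a, 1⋯1]], where Ĝ is a generator matrix of C, a ∈ F_q^{n'−r}, and the last block consists of r columns. -/
open Matrix

variable {F : Type*} [Field F]

/-- Corollary 7.  Let `C'` be an `[n',k',W]_q` code with minimum column multiplicity `r`.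
Then there exists an `[n'-r, k'-1, W]_q` code `C` with minimum column multiplicity at
least `r` such that `C'` is equivalent to the code generated by `[[Ĝ, 0], [a, 1⋯1]]`,
where `Ĝ` is a generator matrix of `C` and the last block has `r` columns. -/
theorem stmt9 [Fintype F] [DecidableEq F] {n' k' r : ℕ} (W : Set ℕ)
    (hW : ∀ w ∈ W, 1 ≤ w)
    (C' : Submodule F (Fin n' → F)) (hdim : Module.finrank F C' = k')
    (heff : ∀ j, ∃ c ∈ C', c j ≠ 0)
    (hw : ∀ c ∈ C', c ≠ 0 → hammingNorm c ∈ W)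
    (G' : Matrix (Fin k') (Fin n') F) (hG' : rowSpan G' = C')
    (hrlb : ∀ j, r ≤ colMult G' j) (hrex : ∃ j, colMult G' j = r) :
    ∃ (C : Submodule F (Fin (n' - r) → F))
      (Gres : Matrix (Fin (k' - 1)) (Fin (n' - r)) F) (aa : Fin (n' - r) → F),
      rowSpan Gres = C ∧
      Module.finrank F C = k' - 1 ∧
      (∀ j, ∃ c ∈ C, c j ≠ 0) ∧
      (∀ c ∈ C, c ≠ 0 → hammingNorm c ∈ W) ∧
      (∀ j2, r ≤ colMult Gres j2) ∧
      CodeEquivR C' (rowSpan (extBlock (r := r) Gres aa)) := by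
  classical
  obtain ⟨j0, hj0⟩ := hrex
  -- membership in C' via linear combinations of rows of G'
  have hmem : ∀ c, c ∈ C' ↔ ∃ x : Fin k' → F, ∑ i, x i • G' i = c := by
    intro c
    rw [← hG', rowSpan, Submodule.mem_span_range_iff_exists_fun]
  have happ : ∀ (x : Fin k' → F) (j : Fin n'), (∑ i, x i • G' i) j = ∑ i, x i * G' i j := by
    intro x j
    simp [Finset.sum_apply]
  -- columns are nonzero
  have hcolne : ∀ j : Fin n', (fun i => G' i j) ≠ 0 := by
    intro j hcol
    obtain ⟨c, hc, hcj⟩ := heff j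
    obtain ⟨x, rfl⟩ := (hmem c).mp hc
    apply hcj
    rw [happ]
    apply Finset.sum_eq_zero
    intro i _
    have : G' i j = 0 := congrFun hcol i
    simp [this]
  -- proportionality of coordinates for columns with equal span
  have hrel : ∀ j j' : Fin n',
      Submodule.span F {fun i => G' i j'} = Submodule.span F {fun i => G' i j} →
      ∃ μ : F, μ ≠ 0 ∧ ∀ c ∈ C', c j' = μ * c j := by
    intro j j' hspan
    have h1 : (fun i => G' i j') ∈ Submodule.span F {fun i => G' i j} := by
      rw [← hspan]; exact Submodule.mem_span_singleton_self _
    obtain ⟨μ, hμ⟩ := Submodule.mem_span_singleton.mp h1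
    have hμne : μ ≠ 0 := by
      rintro rfl
      apply hcolne j'
      rw [← hμ]; simp
    refine ⟨μ, hμne, fun c hc => ?_⟩
    obtain ⟨x, rfl⟩ := (hmem c).mp hc
    rw [happ, happ, Finset.mul_sum]
    apply Finset.sum_congr rfl
    intro i _
    have : G' i j' = μ * G' i j := (congrFun hμ i).symm
    rw [this]; ring
  -- the class of column j0
  set Sd : Finset (Fin n') := Finset.univ.filter
    (fun j => Submodule.span F {fun i => G' i j} = Submodule.span F {fun i => G' i j0})
    with hSd
  have hSdmem : ∀ j, j ∈ Sd ↔
      Submodule.span F {fun i => G' i j} = Submodule.span F {fun i => G' i j0} := by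
    intro j; simp [hSd]
  have hSdcard : Sd.card = r := by
    rw [← hj0]
    rw [colMult, Nat.card_eq_fintype_card]
    rw [Fintype.card_subtype]
  have hj0S : j0 ∈ Sd := by rw [hSdmem]
  have hrpos : 1 ≤ r := by
    rw [← hSdcard]
    exact Finset.card_pos.mpr ⟨j0, hj0S⟩
  have hrn : r ≤ n' := by
    rw [← hSdcard]
    simpa using Finset.card_le_univ Sd
  -- the coordinate permutation
  have hcardS : Fintype.card {j : Fin n' // j ∈ Sd} = r := by
    rw [Fintype.card_coe]
    exact hSdcard
  have hcardC : Fintype.card {j : Fin n' // ¬ j ∈ Sd} = n' - r := by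
    rw [Fintype.card_subtype_compl, hcardS, Fintype.card_fin]
  let eS : {j : Fin n' // j ∈ Sd} ≃ Fin r := Fintype.equivFinOfCardEq hcardS
  let eC : {j : Fin n' // ¬ j ∈ Sd} ≃ Fin (n' - r) := Fintype.equivFinOfCardEq hcardC
  let f : (Fin (n' - r) ⊕ Fin r) ≃ Fin n' :=
    (Equiv.sumCongr eC.symm eS.symm).trans ((Equiv.sumComm _ _).trans
      (Equiv.sumCompl (· ∈ Sd)))
  have hfl : ∀ j2, f (Sum.inl j2) ∉ Sd := by
    intro j2
    show ((Equiv.sumCompl (· ∈ Sd)) (Sum.inr (eC.symm j2)) : Fin n') ∉ Sd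
    rw [Equiv.sumCompl_apply_inr]
    exact (eC.symm j2).2
  have hfr : ∀ t, f (Sum.inr t) ∈ Sd := by
    intro t
    show ((Equiv.sumCompl (· ∈ Sd)) (Sum.inl (eS.symm t)) : Fin n') ∈ Sd
    rw [Equiv.sumCompl_apply_inl]
    exact (eS.symm t).2
  have hsurj : ∀ j ∉ Sd, ∃ j2, f (Sum.inl j2) = j := by
    intro j hj
    rcases hp : f.symm j with j2 | t
    · exact ⟨j2, by rw [← hp, Equiv.apply_symm_apply]⟩
    · exfalso
      apply hj
      have : j = f (Sum.inr t) := by rw [← hp, Equiv.apply_symm_apply]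
      rw [this]; exact hfr t
  let h : Fin (n' - r) → Fin n' := fun j2 => f (Sum.inl j2)
  have hhinj : Function.Injective h := by
    intro a b hab
    have := f.injective hab
    exact Sum.inl_injective this
  let ρ : (Fin n' → F) →ₗ[F] (Fin (n' - r) → F) := LinearMap.funLeft F F h
  -- the subcode vanishing at j0
  let φ : C' →ₗ[F] F := (LinearMap.proj j0).comp C'.subtype
  let K' : Submodule F (Fin n' → F) := Submodule.map C'.subtype (LinearMap.ker φ)
  have hK'mem : ∀ c, c ∈ K' ↔ c ∈ C' ∧ c j0 = 0 := by
    intro c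
    constructor
    · rintro ⟨⟨y, hy⟩, hyk, rfl⟩
      exact ⟨hy, hyk⟩
    · rintro ⟨hc, hcj⟩
      exact ⟨⟨c, hc⟩, hcj, rfl⟩
  -- normalized codeword with value 1 at j0
  obtain ⟨c0, hc0C, hc0j⟩ := heff j0
  let c0' : Fin n' → F := (c0 j0)⁻¹ • c0
  have hc0'C : c0' ∈ C' := C'.smul_mem _ hc0C
  have hc0'j : c0' j0 = 1 := by
    simp [c0', inv_mul_cancel₀ hc0j]
  -- dimension of K'
  have hK'rank : Module.finrank F K' = k' - 1 := by
    have hsurjφ : Function.Surjective φ := by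
      intro y
      refine ⟨y • ⟨c0', hc0'C⟩, ?_⟩
      show y * c0' j0 = y
      rw [hc0'j, mul_one]
    have hrange : LinearMap.range φ = ⊤ := LinearMap.range_eq_top.mpr hsurjφ
    have hrn2 := LinearMap.finrank_range_add_finrank_ker φ
    rw [hrange, hdim] at hrn2
    have h1 : Module.finrank F (⊤ : Submodule F F) = 1 := by
      simp [finrank_top]
    rw [h1] at hrn2
    have : Module.finrank F (LinearMap.ker φ) = k' - 1 := by omega
    show Module.finrank F (Submodule.map C'.subtype (LinearMap.ker φ)) = k' - 1
    rw [Submodule.finrank_map_subtype_eq]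
    exact this
  -- basis of K'
  let b : Module.Basis (Fin (k' - 1)) F K' := Module.finBasisOfFinrankEq F K' hK'rank
  let bb : Fin (k' - 1) → (Fin n' → F) := fun i => (b i : Fin n' → F)
  have hbbK : ∀ i, bb i ∈ K' := fun i => (b i).2
  have hbbC : ∀ i, bb i ∈ C' := fun i => ((hK'mem _).mp (hbbK i)).1
  have hbbj0 : ∀ i, bb i j0 = 0 := fun i => ((hK'mem _).mp (hbbK i)).2
  have hKspan : K' = Submodule.span F (Set.range bb) := by
    have h1 : Submodule.span F (Set.range b) = (⊤ : Submodule F K') := b.span_eq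
    have h2 : Submodule.map K'.subtype (Submodule.span F (Set.range b)) = K' := by
      rw [h1, Submodule.map_top, Submodule.range_subtype]
    rw [← h2, Submodule.map_span]
    congr 1
    rw [← Set.range_comp]
    rfl
  -- the residual generator matrix and code
  let Gres : Matrix (Fin (k' - 1)) (Fin (n' - r)) F := Matrix.of fun i j2 => bb i (h j2)
  let C : Submodule F (Fin (n' - r) → F) := rowSpan Gres
  have hCmap : C = Submodule.map ρ K' := by
    show rowSpan Gres = _
    rw [rowSpan, hKspan, Submodule.map_span, ← Set.range_comp]
    rfl
  -- injectivity of ρ on K'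
  have hvanish : ∀ c ∈ C', c j0 = 0 → ∀ j ∈ Sd, c j = 0 := by
    intro c hc hcj j hj
    obtain ⟨μ, _, hμ⟩ := hrel j0 j ((hSdmem j).mp hj)
    rw [hμ c hc, hcj, mul_zero]
  have hinjK : ∀ c ∈ K', ρ c = 0 → c = 0 := by
    intro c hc hρ
    obtain ⟨hcC, hcj0⟩ := (hK'mem c).mp hc
    funext j
    by_cases hj : j ∈ Sd
    · exact hvanish c hcC hcj0 j hj
    · obtain ⟨j2, rfl⟩ := hsurj j hj
      exact congrFun hρ j2
  -- finrank of C
  have hCrank : Module.finrank F C = k' - 1 := by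
    let ψ : K' →ₗ[F] (Fin (n' - r) → F) := ρ.comp K'.subtype
    have hψinj : Function.Injective ψ := by
      rw [← LinearMap.ker_eq_bot, LinearMap.ker_eq_bot']
      intro m hm
      exact Subtype.ext (hinjK m.1 m.2 hm)
    have hψrange : LinearMap.range ψ = C := by
      rw [hCmap]
      show LinearMap.range (ρ.comp K'.subtype) = _
      rw [LinearMap.range_comp, Submodule.range_subtype]
    rw [← hψrange, LinearMap.finrank_range_of_inj hψinj, hK'rank]
  -- effective length of C
  have heffC : ∀ j2, ∃ c ∈ C, c j2 ≠ 0 := by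
    intro j2
    have hjS : h j2 ∉ Sd := hfl j2
    set u : Fin k' → F := fun i => G' i j0 with hu
    set w : Fin k' → F := fun i => G' i (h j2) with hwdef
    have hwnot : w ∉ Submodule.span F {u} := by
      intro hmem2
      obtain ⟨μ, hμ⟩ := Submodule.mem_span_singleton.mp hmem2
      have hμne : μ ≠ 0 := by
        rintro rfl
        apply hcolne (h j2)
        rw [← hwdef, ← hμ]; simp
      apply hjS
      rw [hSdmem]
      calc Submodule.span F {w} = Submodule.span F {μ • u} := by rw [hμ]
        _ = Submodule.span F {u} := Submodule.span_singleton_smul_eq (IsUnit.mk0 μ hμne) u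
    obtain ⟨x, hx0, hxw⟩ : ∃ x : Fin k' → F, ∑ i, x i * u i = 0 ∧ ∑ i, x i * w i ≠ 0 := by
      by_contra hcon
      push_neg at hcon
      apply hwnot
      have hune : u ≠ 0 := hcolne j0
      obtain ⟨i1, hi1⟩ : ∃ i1, u i1 ≠ 0 := Function.ne_iff.mp hune
      have key : ∀ i, w i = (w i1 * (u i1)⁻¹) * u i := by
        intro i
        set x : Fin k' → F :=
          fun m => (if m = i then (1:F) else 0)
            - (u i * (u i1)⁻¹) * (if m = i1 then (1:F) else 0) with hx
        have hsingle : ∀ (i' : Fin k') (v : Fin k' → F),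
            ∑ m, (if m = i' then (1:F) else 0) * v m = v i' := by
          intro i' v
          simp [ite_mul]
        have hsum : ∀ v : Fin k' → F,
            ∑ m, x m * v m = v i - (u i * (u i1)⁻¹) * v i1 := by
          intro v
          have hterm : ∀ m, x m * v m = (if m = i then (1:F) else 0) * v m
              - (u i * (u i1)⁻¹) * ((if m = i1 then (1:F) else 0) * v m) := by
            intro m
            simp only [hx]
            ring
          rw [Finset.sum_congr rfl (fun m _ => hterm m), Finset.sum_sub_distrib,
            hsingle, ← Finset.mul_sum, hsingle]
        have hxu : ∑ m, x m * u m = 0 := by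
          rw [hsum]
          field_simp
          ring
        have hxw2 := hcon x hxu
        rw [hsum] at hxw2
        have : w i = (u i * (u i1)⁻¹) * w i1 := sub_eq_zero.mp hxw2
        rw [this]; ring
      refine Submodule.mem_span_singleton.mpr ⟨w i1 * (u i1)⁻¹, ?_⟩
      funext i
      rw [key i]
      rfl
    set c : Fin n' → F := ∑ i, x i • G' i with hc
    have hcC : c ∈ C' := (hmem c).mpr ⟨x, rfl⟩
    have hcj0 : c j0 = 0 := by rw [hc, happ]; exact hx0
    have hcK : c ∈ K' := (hK'mem c).mpr ⟨hcC, hcj0⟩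
    refine ⟨ρ c, ?_, ?_⟩
    · rw [hCmap]; exact ⟨c, hcK, rfl⟩
    · show c (h j2) ≠ 0
      rw [hc, happ]
      exact hxw
  -- weights of C
  have hwC : ∀ c ∈ C, c ≠ 0 → hammingNorm c ∈ W := by
    intro c2 hc2 hne
    rw [hCmap] at hc2
    obtain ⟨k, hkK, rfl⟩ := hc2
    obtain ⟨hkC, hkj0⟩ := (hK'mem k).mp hkK
    have hkne : k ≠ 0 := by
      rintro rfl
      exact hne (map_zero ρ)
    have hnorm : hammingNorm (ρ k) = hammingNorm k := by
      unfold hammingNorm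
      refine Finset.card_bij (fun j2 _ => h j2) ?_ ?_ ?_
      · intro j2 hj2
        simp only [Finset.mem_filter, Finset.mem_univ, true_and] at hj2 ⊢
        exact hj2
      · intro a _ b _ hab
        exact hhinj hab
      · intro j hj
        simp only [Finset.mem_filter, Finset.mem_univ, true_and] at hj
        have hjS : j ∉ Sd := fun hjS => hj (hvanish k hkC hkj0 j hjS)
        obtain ⟨j2, hj2⟩ := hsurj j hjS
        refine ⟨j2, ?_, hj2⟩
        simp only [Finset.mem_filter, Finset.mem_univ, true_and]
        show k (h j2) ≠ 0
        rw [show h j2 = j from hj2]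
        exact hj
    rw [hnorm]
    exact hw k hkC hkne
  -- column multiplicity of Gres
  have hmult : ∀ j2, r ≤ colMult Gres j2 := by
    intro j2
    have hjS : h j2 ∉ Sd := hfl j2
    have key : ∀ j' : Fin n',
        Submodule.span F {fun i => G' i j'} = Submodule.span F {fun i => G' i (h j2)} →
        ∃ j2', h j2' = j' ∧
          Submodule.span F {fun i => Gres i j2'} = Submodule.span F {fun i => Gres i j2} := by
      intro j' hj'
      have hj'S : j' ∉ Sd := by
        intro hj'S
        apply hjS
        rw [hSdmem] at hj'S ⊢
        rw [← hj', hj'S]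
      obtain ⟨j2', hj2'⟩ := hsurj j' hj'S
      refine ⟨j2', hj2', ?_⟩
      obtain ⟨μ, hμne, hμ⟩ := hrel (h j2) j' hj'
      have hcol : (fun i => Gres i j2') = μ • (fun i => Gres i j2) := by
        funext i
        show bb i (h j2') = μ * bb i (h j2)
        rw [show h j2' = j' from hj2']
        exact hμ (bb i) (hbbC i)
      rw [hcol]
      exact Submodule.span_singleton_smul_eq (IsUnit.mk0 μ hμne) _
    have hle : colMult G' (h j2) ≤ colMult Gres j2 := by
      unfold colMult
      have minj : Function.Injective
          (fun p : {j' : Fin n' // Submodule.span F {fun i => G' i j'} =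
              Submodule.span F {fun i => G' i (h j2)}} =>
            (⟨Classical.choose (key p.1 p.2),
              (Classical.choose_spec (key p.1 p.2)).2⟩ :
            {j2' : Fin (n' - r) // Submodule.span F {fun i => Gres i j2'} =
              Submodule.span F {fun i => Gres i j2}})) := by
        intro p q hpq
        have hp := (Classical.choose_spec (key p.1 p.2)).1
        have hq := (Classical.choose_spec (key q.1 q.2)).1
        apply Subtype.ext
        rw [← hp, ← hq]
        congr 1
        exact congrArg Subtype.val hpq
      exact Nat.card_le_card_of_injective _ minj
    exact le_trans (hrlb (h j2)) hle
  -- the scaling for the last r coordinates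
  have hlam : ∀ t : Fin r, ∃ μ : F, μ ≠ 0 ∧ ∀ c ∈ C', c (f (Sum.inr t)) = μ * c j0 :=
    fun t => hrel j0 (f (Sum.inr t)) ((hSdmem _).mp (hfr t))
  let lam : Fin r → F := fun t => Classical.choose (hlam t)
  have hlamne : ∀ t, lam t ≠ 0 := fun t => (Classical.choose_spec (hlam t)).1
  have hlameq : ∀ t, ∀ c ∈ C', c (f (Sum.inr t)) = lam t * c j0 :=
    fun t => (Classical.choose_spec (hlam t)).2
  let d : (Fin (n' - r) ⊕ Fin r) → Fˣ :=
    Sum.elim (fun _ => 1) (fun t => (Units.mk0 (lam t) (hlamne t))⁻¹)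
  let aa : Fin (n' - r) → F := fun j2 => c0' (h j2)
  -- the linear monomial map
  let Mlin : (Fin n' → F) →ₗ[F] ((Fin (n' - r) ⊕ Fin r) → F) :=
    { toFun := monMap f.symm d (RingEquiv.refl F)
      map_add' := by
        intro v w
        funext p
        simp [monMap]
        ring
      map_smul' := by
        intro m v
        funext p
        simp [monMap]
        ring }
  have hMl : ∀ (v : Fin n' → F) (j2 : Fin (n' - r)), Mlin v (Sum.inl j2) = v (h j2) := by
    intro v j2
    show (RingEquiv.refl F) ((d (Sum.inl j2) : F) * v (f.symm.symm (Sum.inl j2))) = _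
    simp [d]
    rfl
  have hMr : ∀ v ∈ C', ∀ t : Fin r, Mlin v (Sum.inr t) = v j0 := by
    intro v hv t
    show (RingEquiv.refl F) ((d (Sum.inr t) : F) * v (f.symm.symm (Sum.inr t))) = _
    simp only [RingEquiv.refl_apply, Equiv.symm_symm]
    rw [hlameq t v hv]
    simp [d]
    rw [← mul_assoc, inv_mul_cancel₀ (hlamne t), one_mul]
  -- rows of the extended block matrix
  have hrowtop : ∀ i, Mlin (bb i) = extBlock (r := r) Gres aa (Sum.inl i) := by
    intro i
    funext p
    rcases p with j2 | t
    · rw [hMl]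
      rfl
    · rw [hMr (bb i) (hbbC i) t, hbbj0 i]
      rfl
  have hrowbot : Mlin c0' = extBlock (r := r) Gres aa (Sum.inr ()) := by
    funext p
    rcases p with j2 | t
    · rw [hMl]
      rfl
    · rw [hMr c0' hc0'C t, hc0'j]
      rfl
  -- the equivalence
  have hequiv : CodeEquivR C' (rowSpan (extBlock (r := r) Gres aa)) := by
    refine ⟨f.symm, d, RingEquiv.refl F, ?_⟩
    have hcoe : monMap f.symm d (RingEquiv.refl F) = ⇑Mlin := rfl
    have hmapeq : Submodule.map Mlin C' = rowSpan (extBlock (r := r) Gres aa) := by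
      apply le_antisymm
      · rw [Submodule.map_le_iff_le_comap]
        intro c hc
        rw [Submodule.mem_comap]
        have hk : c - c j0 • c0' ∈ K' := by
          rw [hK'mem]
          constructor
          · exact C'.sub_mem hc (C'.smul_mem _ hc0'C)
          · simp [hc0'j]
        have hdecomp : Mlin c = Mlin (c - c j0 • c0') + c j0 • Mlin c0' := by
          rw [LinearMap.map_sub, LinearMap.map_smul]
          abel
        rw [hdecomp]
        apply Submodule.add_mem
        · have : Mlin (c - c j0 • c0') ∈ Submodule.map Mlin K' := ⟨_, hk, rfl⟩
          rw [hKspan, Submodule.map_span, ← Set.range_comp] at this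
          refine Submodule.span_mono ?_ this
          rintro _ ⟨i, rfl⟩
          exact ⟨Sum.inl i, (hrowtop i).symm⟩
        · apply Submodule.smul_mem
          exact Submodule.subset_span ⟨Sum.inr (), hrowbot.symm⟩
      · rw [rowSpan, Submodule.span_le]
        rintro _ ⟨p, rfl⟩
        rcases p with i | u
        · exact ⟨bb i, hbbC i, hrowtop i⟩
        · cases u
          exact ⟨c0', hc0'C, hrowbot⟩
    rw [hcoe, ← Submodule.map_coe, hmapeq]
  exact ⟨C, Gres, aa, rfl, hCrank, heffC, hwC, hmult, hequiv⟩
end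

section
/- Let C be a linear [n,k]_q code of effective length n with generator matrix G, all of whose nonzero codewords have Hamming weight in W ⊆ ℕ_{≥1}, and let M̃ be the set of points of PG(k−1, F_q) spanned by the columns of G. For each P ∈ M̃ with column multiplicity m(P), there exists a linear code C_P of effective length n−m(P) and dimension k−1, all of whose nonzero codewords have weight in W, such that C is equivalent to the code generated by a block matrix [[Ĝ_P, 0],[a, 1⋯1]], where Ĝ_P is a generator matrix of C_P, a ∈ F_q^{n−m(P)}, and the last block consists of m(P) columns. -/
open Matrix

variable {F : Type*} [Field F]

section Helpers

variable {F : Type*} [Field F]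

lemma hammingNorm_scale_perm {n1 n2 : Type*} [Fintype n1] [Fintype n2]
    [DecidableEq F] (e : n1 ≃ n2) (d : n2 → Fˣ) (v : n1 → F) :
    hammingNorm (fun j => (d j : F) * v (e.symm j)) = hammingNorm v := by
  unfold hammingNorm
  refine Finset.card_bij' (fun j _ => e.symm j) (fun i _ => e i) ?_ ?_ ?_ ?_
  · intro a ha
    simp only [Finset.mem_filter, Finset.mem_univ, true_and] at ha ⊢
    exact fun h => ha (by simp [h])
  · intro a ha
    simp only [Finset.mem_filter, Finset.mem_univ, true_and] at ha ⊢
    simp [ha]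
  · intro a _; simp
  · intro a _; simp

lemma hammingNorm_sum_elim_zero {a b : Type*} [Fintype a] [Fintype b]
    [DecidableEq F] (c : a → F) :
    hammingNorm (Sum.elim c (0 : b → F)) = hammingNorm c := by
  unfold hammingNorm
  refine (Finset.card_bij (fun j _ => Sum.inl j) ?_ ?_ ?_).symm
  · intro a ha
    simp only [Finset.mem_filter, Finset.mem_univ, true_and] at ha ⊢
    simpa using ha
  · intro a _ b _ h; simpa using h
  · rintro (x | x) hx
    · exact ⟨x, by simpa using hx, rfl⟩
    · simp at hx

end Helpers

set_option maxHeartbeats 1000000 in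
set_option synthInstance.maxHeartbeats 200000 in
/-- Lemma 8.  Let `C` be an `[n,k,W]_q` code with generator matrix `G`.  For each point
`P` spanned by a column of `G` (say column `j0`, with multiplicity `m`) there exists an
`[n - m, k - 1, W]_q` code `C_P` such that `C` is equivalent to the code generated by
the block matrix `[[Ĝ_P, 0], [a, 1⋯1]]`, where `Ĝ_P` generates `C_P` and the last block
has `m` columns. -/
theorem stmt10 [Fintype F] [DecidableEq F] {n k : ℕ} (W : Set ℕ)
    (hW : ∀ w ∈ W, 1 ≤ w)
    (C : Submodule F (Fin n → F)) (hdim : Module.finrank F C = k)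
    (heff : ∀ j, ∃ c ∈ C, c j ≠ 0)
    (hw : ∀ c ∈ C, c ≠ 0 → hammingNorm c ∈ W)
    (G : Matrix (Fin k) (Fin n) F) (hG : rowSpan G = C)
    (j0 : Fin n) (m : ℕ) (hm : colMult G j0 = m) :
    ∃ (CP : Submodule F (Fin (n - m) → F))
      (GP : Matrix (Fin (k - 1)) (Fin (n - m)) F) (aa : Fin (n - m) → F),
      rowSpan GP = CP ∧
      Module.finrank F CP = k - 1 ∧
      (∀ j, ∃ c ∈ CP, c j ≠ 0) ∧
      (∀ c ∈ CP, c ≠ 0 → hammingNorm c ∈ W) ∧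
      CodeEquivR C (rowSpan (extBlock (r := m) GP aa)) := by
  classical
  -- rows of G lie in C
  have hrow : ∀ i, G i ∈ C := fun i => hG ▸ Submodule.subset_span ⟨i, rfl⟩
  -- proportional columns give proportional coordinates
  have hCj : ∀ (j : Fin n) (lam : F), (∀ i, G i j = lam * G i j0) →
      ∀ c ∈ C, c j = lam * c j0 := by
    intro j lam hcol c hc
    rw [← hG] at hc
    have hle : rowSpan G ≤ LinearMap.ker ((LinearMap.proj j : (Fin n → F) →ₗ[F] F)
        - lam • (LinearMap.proj j0 : (Fin n → F) →ₗ[F] F)) := by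
      rw [rowSpan, Submodule.span_le]
      rintro _ ⟨i, rfl⟩
      simp [LinearMap.mem_ker, hcol i]
    have := hle hc
    simp only [LinearMap.mem_ker, LinearMap.sub_apply, LinearMap.smul_apply,
      LinearMap.proj_apply, smul_eq_mul, sub_eq_zero] at this
    exact this
  -- no zero columns
  have hcolnz : ∀ j, ∃ i, G i j ≠ 0 := by
    intro j
    by_contra h
    push_neg at h
    obtain ⟨c, hc, hcj⟩ := heff j
    exact hcj (by simpa using hCj j 0 (fun i => by simp [h i]) c hc)
  set P : Fin n → Prop := fun j => Submodule.span F {fun i => G i j} =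
      Submodule.span F {fun i => G i j0} with hP
  have hPj0 : P j0 := rfl
  have hmn : Fintype.card {j : Fin n // P j} = m := by
    rw [← Nat.card_eq_fintype_card]
    exact hm
  have hc1 : Fintype.card {j : Fin n // ¬ P j} = n - m := by
    rw [Fintype.card_subtype_compl, hmn, Fintype.card_fin]
  set e1 : {j : Fin n // ¬ P j} ≃ Fin (n - m) := Fintype.equivFinOfCardEq hc1 with he1
  set e2 : {j : Fin n // P j} ≃ Fin m := Fintype.equivFinOfCardEq hmn with he2
  set τ : (Fin (n - m) ⊕ Fin m) ≃ Fin n :=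
    (Equiv.sumCongr e1.symm e2.symm).trans ((Equiv.sumComm _ _).trans (Equiv.sumCompl P))
    with hτ
  have htl : ∀ j, ¬ P (τ (Sum.inl j)) := fun j => (e1.symm j).2
  have htr : ∀ j, P (τ (Sum.inr j)) := fun j => (e2.symm j).2
  -- the codeword cs with cs j0 = 1
  obtain ⟨c0, hc0C, hc0j⟩ := heff j0
  set cs : Fin n → F := (c0 j0)⁻¹ • c0 with hcs
  have hcsC : cs ∈ C := C.smul_mem _ hc0C
  have hcsj : cs j0 = 1 := by simp [hcs, inv_mul_cancel₀ hc0j]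
  -- the scalars lam j
  have hexlam : ∀ j : Fin n, ∃ a : F, a ≠ 0 ∧ (P j → ∀ i, G i j = a * G i j0) := by
    intro j
    by_cases hj : P j
    · have hmem : (fun i => G i j) ∈ Submodule.span F ({fun i => G i j0} :
          Set (Fin k → F)) := by
        rw [← hj]
        exact Submodule.mem_span_singleton_self _
      obtain ⟨a, ha⟩ := Submodule.mem_span_singleton.mp hmem
      refine ⟨a, ?_, fun _ i => ?_⟩
      · rintro rfl
        obtain ⟨i, hi⟩ := hcolnz j
        apply hi
        have := congrFun ha i
        simpa using this.symm
      · have := congrFun ha i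
        simpa using this.symm
    · exact ⟨1, one_ne_zero, fun h => absurd h hj⟩
  choose lam hlamne hlamcol using hexlam
  have hkey : ∀ c ∈ C, ∀ j, P j → c j = lam j * c j0 :=
    fun c hc j hj => hCj j (lam j) (hlamcol j hj) c hc
  -- the kernel of evaluation at j0
  set φ : C →ₗ[F] F := (LinearMap.proj j0 : (Fin n → F) →ₗ[F] F).comp C.subtype with hφ
  have hφsurj : Function.Surjective φ := by
    intro y
    refine ⟨y • ⟨cs, hcsC⟩, ?_⟩
    simp [hφ, hcsj]
  have hKc : Module.finrank F (LinearMap.ker φ) = k - 1 := by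
    have h1 := LinearMap.finrank_range_add_finrank_ker φ
    rw [LinearMap.range_eq_top.mpr hφsurj, finrank_top, Module.finrank_self, hdim] at h1
    omega
  haveI : Module.Free F (LinearMap.ker φ) := Module.Free.of_basis (Module.Basis.ofVectorSpace F (↥(LinearMap.ker φ)))
  set bb : Module.Basis (Fin (k - 1)) F (LinearMap.ker φ) :=
    Module.finBasisOfFinrankEq F _ hKc with hbb
  set f : (LinearMap.ker φ) →ₗ[F] (Fin n → F) :=
    C.subtype.comp (LinearMap.ker φ).subtype with hf
  have hfinj : Function.Injective f := by
    rw [hf, LinearMap.coe_comp]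
    exact C.injective_subtype.comp (LinearMap.ker φ).injective_subtype
  set bf : Fin (k - 1) → (Fin n → F) := fun i => f (bb i) with hbf
  set K : Submodule F (Fin n → F) := Submodule.span F (Set.range bf) with hKdef
  have hK : K = LinearMap.range f := by
    rw [hKdef]
    have hr : Set.range bf = ⇑f '' Set.range bb := by
      rw [← Set.range_comp]; rfl
    rw [hr, ← Submodule.map_span, bb.span_eq, Submodule.map_top]
  have hKmem : ∀ c, c ∈ K ↔ c ∈ C ∧ c j0 = 0 := by
    intro c
    rw [hK, LinearMap.mem_range]
    constructor
    · rintro ⟨x, rfl⟩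
      refine ⟨((x : C) : _).2, ?_⟩
      have hx := x.2
      simp only [hφ, LinearMap.mem_ker, LinearMap.comp_apply, LinearMap.proj_apply,
        Submodule.coe_subtype] at hx
      exact hx
    · rintro ⟨hc, hj⟩
      refine ⟨⟨⟨c, hc⟩, ?_⟩, rfl⟩
      simp only [hφ, LinearMap.mem_ker, LinearMap.comp_apply, LinearMap.proj_apply,
        Submodule.coe_subtype]
      exact hj
  have hKrank : Module.finrank F K = k - 1 := by
    rw [hK, LinearMap.finrank_range_of_inj hfinj, hKc]
  have hbfK : ∀ i, bf i ∈ K := fun i => Submodule.subset_span ⟨i, rfl⟩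
  have hKzero : ∀ c ∈ K, ∀ j', P j' → c j' = 0 := by
    intro c hc j' hj'
    obtain ⟨hcC, hcj0⟩ := (hKmem c).mp hc
    rw [hkey c hcC j' hj', hcj0, mul_zero]
  -- the monomial transformation
  set d : (Fin (n - m) ⊕ Fin m) → Fˣ :=
    Sum.elim (fun _ => 1) (fun j => Units.mk0 (lam (τ (Sum.inr j)))⁻¹
      (inv_ne_zero (hlamne _))) with hd
  set L : (Fin n → F) →ₗ[F] (Fin (n - m) ⊕ Fin m → F) :=
    { toFun := fun v j => (d j : F) * v (τ j)
      map_add' := by intro u v; funext j; simp [mul_add]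
      map_smul' := by intro a v; funext j; simp [Pi.smul_apply, smul_eq_mul]; ring }
    with hL
  have hLapp : ∀ v j, L v j = (d j : F) * v (τ j) := fun v j => rfl
  have hLinj : Function.Injective L := by
    have h0 : ∀ v, L v = 0 → v = 0 := by
      intro v hv
      funext i
      have := congrFun hv (τ.symm i)
      rw [hLapp, Equiv.apply_symm_apply] at this
      have hd0 : ((d (τ.symm i)) : F) ≠ 0 := Units.ne_zero _
      simpa [hd0] using this
    intro u v huv
    have := h0 (u - v) (by rw [map_sub, huv, sub_self])
    exact sub_eq_zero.mp this
  set GP : Matrix (Fin (k - 1)) (Fin (n - m)) F :=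
    Matrix.of fun i j => bf i (τ (Sum.inl j)) with hGP
  set aa : Fin (n - m) → F := fun j => cs (τ (Sum.inl j)) with haa
  set R : (Fin (n - m) ⊕ Fin m → F) →ₗ[F] (Fin (n - m) → F) :=
    LinearMap.funLeft F F Sum.inl with hR
  have hLK : ∀ c ∈ K, L c = Sum.elim (fun j => c (τ (Sum.inl j))) 0 := by
    intro c hc
    funext j'
    cases j' with
    | inl j => simp [hLapp, hd]
    | inr j =>
        rw [hLapp, hKzero c hc _ (htr j), mul_zero]
        simp
  have hLcs : L cs = Sum.elim aa (fun _ => 1) := by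
    funext j'
    cases j' with
    | inl j => simp [hLapp, hd, haa]
    | inr j =>
        rw [hLapp, hkey cs hcsC _ (htr j), hcsj, mul_one]
        simp [hd, inv_mul_cancel₀ (hlamne (τ (Sum.inr j)))]
  -- C is spanned by bf together with cs
  set b' : (Fin (k - 1) ⊕ Unit) → (Fin n → F) := Sum.elim bf (fun _ => cs) with hb'
  have hC' : C = Submodule.span F (Set.range b') := by
    apply le_antisymm
    · intro c hc
      have h1 : c - c j0 • cs ∈ K := (hKmem _).mpr
        ⟨C.sub_mem hc (C.smul_mem _ hcsC), by simp [hcsj]⟩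
      have h2 : K ≤ Submodule.span F (Set.range b') := by
        rw [hKdef]
        apply Submodule.span_mono
        rintro _ ⟨i, rfl⟩
        exact ⟨Sum.inl i, rfl⟩
      have h3 : cs ∈ Submodule.span F (Set.range b') :=
        Submodule.subset_span ⟨Sum.inr (), rfl⟩
      have h4 := Submodule.add_mem _ (h2 h1) (Submodule.smul_mem _ (c j0) h3)
      simpa using h4
    · rw [Submodule.span_le]
      rintro _ ⟨(i | u), rfl⟩
      · exact ((hKmem _).mp (hbfK i)).1
      · exact hcsC
  -- rows of the block matrix are the images of b' under L
  have hrows : (⇑L ∘ b') = fun i => extBlock (r := m) GP aa i := by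
    funext i
    cases i with
    | inl i =>
        have hLbf := hLK (bf i) (hbfK i)
        funext j'
        rw [Function.comp_apply]
        show L (bf i) j' = _
        rw [hLbf]
        cases j' with
        | inl j => simp [extBlock, hGP]
        | inr j => simp [extBlock]
    | inr u =>
        funext j'
        rw [Function.comp_apply]
        show L cs j' = _
        rw [hLcs]
        cases j' with
        | inl j => simp [extBlock]
        | inr j => simp [extBlock]
  have hmapLC : Submodule.map L C = rowSpan (extBlock (r := m) GP aa) := by
    rw [hC', Submodule.map_span, rowSpan, ← Set.range_comp, hrows]
  -- rowSpan GP as an image of K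
  have hGPi : ∀ i, GP i = R (L (bf i)) := by
    intro i
    rw [hLK (bf i) (hbfK i)]
    funext j
    rfl
  have hCPmap : rowSpan GP = Submodule.map (R ∘ₗ L) K := by
    have hfun : (fun i => GP i) = (⇑(R ∘ₗ L) ∘ bf) := by
      funext i
      rw [Function.comp_apply, LinearMap.comp_apply, ← hGPi]
    rw [rowSpan, hfun, Set.range_comp, ← Submodule.map_span, ← hKdef]
  set ff : K →ₗ[F] (Fin (n - m) → F) := (R ∘ₗ L) ∘ₗ K.subtype with hff
  have hffr : LinearMap.range ff = Submodule.map (R ∘ₗ L) K := by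
    rw [hff, LinearMap.range_comp, Submodule.range_subtype]
  have hffinj : Function.Injective ff := by
    intro x y hxy
    apply Subtype.ext
    apply hLinj
    funext j'
    cases j' with
    | inl j => exact congrFun hxy j
    | inr j =>
        rw [congrFun (hLK _ x.2) (Sum.inr j), congrFun (hLK _ y.2) (Sum.inr j)]
        simp
  refine ⟨rowSpan GP, GP, aa, rfl, ?_, ?_, ?_, ?_⟩
  · -- dimension
    rw [hCPmap, ← hffr, LinearMap.finrank_range_of_inj hffinj, hKrank]
  · -- effective length
    intro j
    by_contra h
    push_neg at h
    have hGP0 : ∀ i, bf i (τ (Sum.inl j)) = 0 := by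
      intro i
      have := h (GP i) (Submodule.subset_span ⟨i, rfl⟩)
      simpa [hGP] using this
    have hK0 : ∀ c ∈ K, c (τ (Sum.inl j)) = 0 := by
      intro c hc
      rw [hKdef] at hc
      have hle : Submodule.span F (Set.range bf) ≤
          LinearMap.ker (LinearMap.proj (τ (Sum.inl j)) : (Fin n → F) →ₗ[F] F) := by
        rw [Submodule.span_le]
        rintro _ ⟨i, rfl⟩
        simpa [LinearMap.mem_ker] using hGP0 i
      simpa [LinearMap.mem_ker] using hle hc
    have hcol : ∀ i, G i (τ (Sum.inl j)) = G i j0 * cs (τ (Sum.inl j)) := by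
      intro i
      have hmem : G i - (G i j0) • cs ∈ K := (hKmem _).mpr
        ⟨C.sub_mem (hrow i) (C.smul_mem _ hcsC), by simp [hcsj]⟩
      have := hK0 _ hmem
      simpa [sub_eq_zero] using this
    have hmu : cs (τ (Sum.inl j)) ≠ 0 := by
      intro h0
      obtain ⟨i, hi⟩ := hcolnz (τ (Sum.inl j))
      exact hi (by rw [hcol i, h0, mul_zero])
    apply htl j
    show Submodule.span F {fun i => G i (τ (Sum.inl j))} =
      Submodule.span F {fun i => G i j0}
    have hcoleq : (fun i => G i (τ (Sum.inl j))) =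
        cs (τ (Sum.inl j)) • (fun i => G i j0) := by
      funext i
      simp [hcol i, mul_comm]
    rw [hcoleq]
    exact Submodule.span_singleton_smul_eq (IsUnit.mk0 _ hmu) _
  · -- weights
    intro c hc hcne
    rw [hCPmap, Submodule.mem_map] at hc
    obtain ⟨c0, hc0K, rfl⟩ := hc
    obtain ⟨hc0C, -⟩ := (hKmem c0).mp hc0K
    have hc0ne : c0 ≠ 0 := by
      rintro rfl
      exact hcne (map_zero _)
    have hnorm : hammingNorm ((R ∘ₗ L) c0) = hammingNorm c0 := by
      have hcc : (R ∘ₗ L) c0 = fun j => c0 (τ (Sum.inl j)) := by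
        funext j
        rw [LinearMap.comp_apply, hR, LinearMap.funLeft_apply, hLK c0 hc0K]
        simp
      have hLfun : L c0 = fun j'' => (d j'' : F) * c0 (τ.symm.symm j'') := by
        funext j''
        rw [Equiv.symm_symm]
        exact hLapp c0 j''
      rw [hcc, ← hammingNorm_sum_elim_zero (b := Fin m) (fun j => c0 (τ (Sum.inl j))),
        ← hLK c0 hc0K, hLfun]
      exact hammingNorm_scale_perm τ.symm d c0
    rw [hnorm]
    exact hw c0 hc0C hc0ne
  · -- equivalence
    refine ⟨τ.symm, d, RingEquiv.refl F, ?_⟩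
    have hMon : monMap τ.symm d (RingEquiv.refl F) = ⇑L := by
      funext v j
      rfl
    rw [hMon, ← hmapLC]
    exact (Submodule.map_coe L C).symm
end

section
/- Let C' be a linear [n',k']_q code of effective length n', all of whose nonzero codewords have Hamming weight in W ⊆ ℕ_{≥1}, with generator matrix G', and let r be its minimum column multiplicity. Then there exists a point P* spanned by a column of G' with multiplicity exactly r such that: (i) the weight enumerator w_{C_{P*}}(x) is lexicographically minimal among the weight enumerators w_{C_P}(x) over all points P spanned by columns of G' of multiplicity r, where C_P denotes the [n'−r, k'−1]_q code obtained from C' by deleting the r columns spanning P and the corresponding row (after transforming a column spanning P into a unit vector); and (ii) C' is equivalent to the code generated by the block matrix [[Ĝ, 0],[a, 1⋯1]] with Ĝ a generator matrix of C_{P*}, a ∈ F_q^{n'−r}, and r columns in the last block. -/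
open Matrix

variable {F : Type*} [Field F]

/-- The weight enumerator of a code, as the sequence `i ↦ A_i` of numbers of codewords
of Hamming weight `i`. -/
noncomputable def wEnum [DecidableEq F] {n : ℕ} (C : Submodule F (Fin n → F)) : ℕ → ℕ :=
  fun i => Nat.card {c : Fin n → F // c ∈ C ∧ hammingNorm c = i}

/-- Lexicographic comparison of weight enumerators (coefficient sequences). -/
def lexLE (f g : ℕ → ℕ) : Prop :=
  f = g ∨ ∃ i, (∀ j < i, f j = g j) ∧ f i < g i

lemma lexLE_refl (f : ℕ → ℕ) : lexLE f f := Or.inl rfl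

lemma lexLE_trans {f g h : ℕ → ℕ} (h1 : lexLE f g) (h2 : lexLE g h) : lexLE f h := by
  rcases h1 with rfl | ⟨i, hag, hlt⟩
  · exact h2
  rcases h2 with rfl | ⟨i', hag', hlt'⟩
  · exact Or.inr ⟨i, hag, hlt⟩
  rcases lt_trichotomy i i' with hii | rfl | hii
  · exact Or.inr ⟨i, fun j hj => (hag j hj).trans (hag' j (hj.trans hii)),
      hlt.trans_le ((hag' i hii).le)⟩
  · exact Or.inr ⟨i, fun j hj => (hag j hj).trans (hag' j hj), hlt.trans hlt'⟩
  · exact Or.inr ⟨i', fun j hj => (hag j (hj.trans hii)).trans (hag' j hj),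
      ((hag i' hii).symm ▸ hlt' : f i' < h i')⟩

lemma lexLE_total (f g : ℕ → ℕ) : lexLE f g ∨ lexLE g f := by
  by_cases hfg : f = g
  · exact Or.inl (Or.inl hfg)
  have hex : ∃ i, f i ≠ g i := by
    by_contra hc; push_neg at hc; exact hfg (funext hc)
  set i := Nat.find hex with hi
  have hne : f i ≠ g i := Nat.find_spec hex
  have hag : ∀ j < i, f j = g j := fun j hj => by
    have := Nat.find_min hex hj; simpa using this
  rcases lt_or_gt_of_ne hne with h | h
  · exact Or.inl (Or.inr ⟨i, hag, h⟩)
  · exact Or.inr (Or.inr ⟨i, fun j hj => (hag j hj).symm, h⟩)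

lemma exists_lexLE_min (s : Finset (ℕ → ℕ)) (hs : s.Nonempty) :
    ∃ f ∈ s, ∀ g ∈ s, lexLE f g := by
  classical
  induction s using Finset.induction with
  | empty => exact absurd hs (by simp)
  | @insert a s' ha ih =>
    by_cases hs' : s'.Nonempty
    · obtain ⟨f, hf, hmin⟩ := ih hs'
      rcases lexLE_total f a with h | h
      · exact ⟨f, Finset.mem_insert_of_mem hf, fun g hg => by
          rcases Finset.mem_insert.1 hg with rfl | hg
          · exact h
          · exact hmin g hg⟩
      · exact ⟨a, Finset.mem_insert_self _ _, fun g hg => by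
          rcases Finset.mem_insert.1 hg with rfl | hg
          · exact lexLE_refl _
          · exact lexLE_trans h (hmin g hg)⟩
    · rw [Finset.not_nonempty_iff_eq_empty] at hs'
      subst hs'
      exact ⟨a, Finset.mem_insert_self _ _, fun g hg => by
        rcases Finset.mem_insert.1 hg with rfl | hg
        · exact lexLE_refl _
        · simp at hg⟩

lemma hammingNorm_sum_left {A B : Type*} [Fintype A] [Fintype B] [DecidableEq F]
    (v : A ⊕ B → F) (hv : ∀ b, v (Sum.inr b) = 0) :
    hammingNorm v = hammingNorm (fun a => v (Sum.inl a)) := by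
  classical
  unfold hammingNorm
  refine (Finset.card_bij (fun a _ => Sum.inl a) ?_ ?_ ?_).symm
  · intro a ha; simpa using ha
  · intro a _ b _ hab; simpa using hab
  · rintro (a | b) hi
    · exact ⟨a, by simpa using hi, rfl⟩
    · exact absurd (hv b) (by simpa using hi)

lemma hammingNorm_monMap {n1 n2 : Type*} [Fintype n1] [Fintype n2] [DecidableEq F]
    (e : n1 ≃ n2) (d : n2 → Fˣ) (α : F ≃+* F) (v : n1 → F) :
    hammingNorm (monMap e d α v) = hammingNorm v := by
  classical
  unfold hammingNorm monMap
  refine Finset.card_bij (fun j _ => e.symm j) ?_ ?_ ?_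
  · intro j hj
    simp only [Finset.mem_filter, Finset.mem_univ, true_and] at hj ⊢
    intro h0; exact hj (by simp [h0])
  · intro a ha b hb hab; exact e.symm.injective hab
  · intro i hi
    refine ⟨e i, ?_, by simp⟩
    simp only [Finset.mem_filter, Finset.mem_univ, true_and] at hi ⊢
    simp only [Equiv.symm_apply_apply]
    intro h
    rcases mul_eq_zero.1 ((EmbeddingLike.map_eq_zero_iff).1 h) with h | h
    · exact (d (e i)).ne_zero h
    · exact hi h

lemma exists_residual [Fintype F] [DecidableEq F] {n' k' r : ℕ} (W : Set ℕ)
    (C' : Submodule F (Fin n' → F)) (hdim : Module.finrank F C' = k')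
    (heff : ∀ j, ∃ c ∈ C', c j ≠ 0)
    (hw : ∀ c ∈ C', c ≠ 0 → hammingNorm c ∈ W)
    (G' : Matrix (Fin k') (Fin n') F) (hG' : rowSpan G' = C')
    (hrex : ∃ j, colMult G' j = r) :
    ∃ (C : Submodule F (Fin (n' - r) → F))
      (Gres : Matrix (Fin (k' - 1)) (Fin (n' - r)) F) (aa : Fin (n' - r) → F),
      rowSpan Gres = C ∧ Module.finrank F C = k' - 1 ∧
      (∀ j, ∃ c ∈ C, c j ≠ 0) ∧ (∀ c ∈ C, c ≠ 0 → hammingNorm c ∈ W) ∧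
      CodeEquivR C' (rowSpan (extBlock (r := r) Gres aa)) := by
  classical
  obtain ⟨j0, hj0⟩ := hrex
  -- no column of G' is zero
  have hcol_ne : ∀ j : Fin n', (fun i => G' i j) ≠ (0 : Fin k' → F) := by
    intro j hj
    obtain ⟨c, hc, hcj⟩ := heff j
    rw [← hG'] at hc
    obtain ⟨x, hx⟩ := (Submodule.mem_span_range_iff_exists_fun F).1 hc
    apply hcj
    rw [← hx]
    have : (∑ i, x i • G' i) j = ∑ i, x i * G' i j := by
      rw [Finset.sum_apply]; simp [Pi.smul_apply]
    rw [this]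
    refine Finset.sum_eq_zero fun i _ => ?_
    have : G' i j = 0 := congrFun hj i
    simp [this]
  set g : Fin k' → F := fun i => G' i j0 with hgdef
  have hgne : g ≠ 0 := hcol_ne j0
  have hk : k' ≠ 0 := by
    rintro rfl
    exact hgne (funext fun i => i.elim0)
  obtain ⟨k, rfl⟩ : ∃ k, k' = k + 1 := ⟨k' - 1, (Nat.succ_pred_eq_of_pos (Nat.pos_of_ne_zero hk)).symm⟩
  simp only [Nat.add_sub_cancel]
  obtain ⟨i0, hgi0⟩ : ∃ i0, g i0 ≠ 0 := by
    by_contra hcon; push_neg at hcon; exact hgne (funext hcon)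
  -- the set of coordinates spanning the chosen point
  set S : Finset (Fin n') := Finset.univ.filter
    (fun j => Submodule.span F {fun i => G' i j} = Submodule.span F {g}) with hSdef
  have hj0S : j0 ∈ S := by simp [hSdef, hgdef]
  have hScard : S.card = r := by
    rw [← hj0]
    rw [colMult, Nat.card_eq_fintype_card]
    rw [Fintype.card_subtype]
  -- scalars for columns in S
  have hcolS : ∀ j ∈ S, ∃ u : Fˣ, (fun i => G' i j) = (u : F) • g := by
    intro j hj
    have hsp : Submodule.span F {fun i => G' i j} = Submodule.span F {g} := by
      simpa [hSdef] using hj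
    have hmem : (fun i => G' i j) ∈ Submodule.span F {g} := by
      rw [← hsp]; exact Submodule.mem_span_singleton_self _
    obtain ⟨b, hb⟩ := Submodule.mem_span_singleton.1 hmem
    have hbne : b ≠ 0 := by
      rintro rfl
      rw [zero_smul] at hb
      exact hcol_ne j hb.symm
    exact ⟨Units.mk0 b hbne, hb.symm⟩
  choose! u hu using hcolS
  -- coordinate equivalence
  have hcompl : (Sᶜ : Finset (Fin n')).card = n' - r := by
    rw [Finset.card_compl, hScard]; simp
  let eS : {x // x ∈ S} ≃ Fin r := S.equivFin.trans (finCongr hScard)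
  let eC : {x // ¬ x ∈ S} ≃ Fin (n' - r) :=
    ((Equiv.subtypeEquivRight (fun x => by simp [Finset.mem_compl])).trans
      (Sᶜ : Finset (Fin n')).equivFin).trans (finCongr hcompl)
  let σ : Fin n' ≃ Fin (n' - r) ⊕ Fin r :=
    (Equiv.sumCompl (· ∈ S)).symm.trans ((Equiv.sumComm _ _).trans (Equiv.sumCongr eC eS))
  have hσinl : ∀ s, σ.symm (Sum.inl s) ∉ S := by
    intro s
    set y : {x // x ∈ (Sᶜ : Finset (Fin n'))} :=
      (Sᶜ : Finset (Fin n')).equivFin.symm ((finCongr hcompl).symm s) with hy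
    have h1 : σ.symm (Sum.inl s) = y.1 := rfl
    rw [h1]
    exact Finset.mem_compl.1 y.2
  have hσinr : ∀ t, σ.symm (Sum.inr t) ∈ S := by
    intro t
    have : σ.symm (Sum.inr t) = ((S.equivFin.symm ((finCongr hScard).symm t)) : {x // x ∈ S}).1 := rfl
    rw [this]
    exact (S.equivFin.symm _).2
  -- the scaling
  set d : Fin (n' - r) ⊕ Fin r → Fˣ :=
    Sum.elim (fun _ => 1) (fun t => (u (σ.symm (Sum.inr t)))⁻¹) with hddef
  -- the monomial linear map
  set L : (Fin n' → F) →ₗ[F] (Fin (n' - r) ⊕ Fin r → F) :=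
    { toFun := monMap σ d (RingEquiv.refl F)
      map_add' := by intro a b; funext j; simp [monMap]; ring
      map_smul' := by intro m a; funext j; simp [monMap]; ring } with hLdef
  set H : Fin (k + 1) → (Fin (n' - r) ⊕ Fin r) → F := fun i => L (G' i) with hHdef
  have hHinl : ∀ i s, H i (Sum.inl s) = G' i (σ.symm (Sum.inl s)) := by
    intro i s
    simp [hHdef, hLdef, monMap, hddef]
  have hHinr : ∀ i t, H i (Sum.inr t) = g i := by
    intro i t
    have hmem := hσinr t
    have hcol := hu _ hmem
    have : G' i (σ.symm (Sum.inr t)) = (u (σ.symm (Sum.inr t)) : F) * g i := by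
      have := congrFun hcol i
      simpa using this
    simp [hHdef, hLdef, monMap, hddef, this]
  -- linear independence of the rows of G'
  have hli : LinearIndependent F (fun i => G' i) := by
    rw [linearIndependent_iff_card_eq_finrank_span]
    rw [Set.finrank]
    have : Submodule.span F (Set.range fun i => G' i) = C' := hG'
    rw [this, hdim]
    simp
  have hLinj : Function.Injective L := by
    intro a b hab
    funext x
    have h1 := congrFun hab (σ x)
    simp only [hLdef, LinearMap.coe_mk, AddHom.coe_mk, monMap, RingEquiv.refl_apply,
      Equiv.symm_apply_apply] at h1
    exact mul_left_cancel₀ (d (σ x)).ne_zero h1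
  have hliH : LinearIndependent F H := hli.map' L (LinearMap.ker_eq_bot.2 hLinj)
  -- the new generator rows
  set M : (Fin k ⊕ Unit) → (Fin (n' - r) ⊕ Fin r) → F :=
    Sum.elim (fun i => H (i0.succAbove i) - (g (i0.succAbove i) / g i0) • H i0)
             (fun _ => (g i0)⁻¹ • H i0) with hMdef
  have hHi0 : H i0 = g i0 • M (Sum.inr ()) := by
    rw [hMdef]
    simp [smul_smul, mul_inv_cancel₀ hgi0]
  have hspanM : Submodule.span F (Set.range M) = Submodule.span F (Set.range H) := by
    apply le_antisymm
    · rw [Submodule.span_le]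
      rintro _ ⟨x, rfl⟩
      rcases x with i | u'
      · exact Submodule.sub_mem _ (Submodule.subset_span ⟨_, rfl⟩)
          (Submodule.smul_mem _ _ (Submodule.subset_span ⟨i0, rfl⟩))
      · exact Submodule.smul_mem _ _ (Submodule.subset_span ⟨i0, rfl⟩)
    · rw [Submodule.span_le]
      rintro _ ⟨i, rfl⟩
      have hHi0mem : H i0 ∈ Submodule.span F (Set.range M) := by
        rw [hHi0]
        exact Submodule.smul_mem _ _ (Submodule.subset_span ⟨Sum.inr (), rfl⟩)
      by_cases hii : i = i0
      · rw [hii]; exact hHi0mem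
      · obtain ⟨j, rfl⟩ := Fin.exists_succAbove_eq hii
        have : H (i0.succAbove j) = M (Sum.inl j) + (g (i0.succAbove j) / g i0) • H i0 := by
          rw [hMdef]; simp
        rw [this]
        exact Submodule.add_mem _ (Submodule.subset_span ⟨Sum.inl j, rfl⟩)
          (Submodule.smul_mem _ _ hHi0mem)
  -- the residual generator matrix
  set Gres : Matrix (Fin k) (Fin (n' - r)) F :=
    Matrix.of (fun i s => M (Sum.inl i) (Sum.inl s)) with hGresdef
  set aa : Fin (n' - r) → F := fun s => M (Sum.inr ()) (Sum.inl s) with haadef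
  have hMinr0 : ∀ i t, M (Sum.inl i) (Sum.inr t) = 0 := by
    intro i t
    rw [hMdef]
    simp only [Sum.elim_inl, Pi.sub_apply, Pi.smul_apply, smul_eq_mul]
    rw [hHinr, hHinr, div_mul_cancel₀ _ hgi0, sub_self]
  have hMext : extBlock (r := r) Gres aa = Matrix.of M := by
    funext x y
    rcases x with i | u' <;> rcases y with s | t
    · rfl
    · simp only [extBlock, Matrix.fromBlocks, Matrix.of_apply, Sum.elim_inl, Sum.elim_inr,
        Matrix.zero_apply]
      exact (hMinr0 i t).symm
    · rfl
    · simp only [extBlock, Matrix.fromBlocks, Matrix.of_apply, Sum.elim_inl, Sum.elim_inr]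
      rw [hMdef]
      simp only [Sum.elim_inr, Pi.smul_apply, smul_eq_mul]
      rw [hHinr, inv_mul_cancel₀ hgi0]
  have hrowM : rowSpan (extBlock (r := r) Gres aa) = Submodule.span F (Set.range M) := by
    rw [hMext]; rfl
  -- linear independence of M
  have hliM : LinearIndependent F M := by
    rw [linearIndependent_iff_card_eq_finrank_span, Set.finrank, hspanM]
    have := finrank_span_eq_card (R := F) hliH
    rw [this]
    simp
  -- linear independence of the rows of Gres
  have hliGres : LinearIndependent F (fun i => Gres i) := by
    rw [Fintype.linearIndependent_iff]
    intro x hx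
    have hzero : (∑ z : Fin k ⊕ Unit, Sum.elim x (fun _ => (0 : F)) z • M z) = 0 := by
      rw [Fintype.sum_sum_type]
      simp only [Sum.elim_inl, Sum.elim_inr, zero_smul, Finset.sum_const_zero, add_zero]
      funext y
      rcases y with s | t
      · have := congrFun hx s
        simp only [Finset.sum_apply, Pi.smul_apply, smul_eq_mul, Pi.zero_apply] at this ⊢
        simpa [hGresdef] using this
      · simp only [Finset.sum_apply, Pi.smul_apply, smul_eq_mul, Pi.zero_apply]
        refine Finset.sum_eq_zero fun i _ => ?_
        rw [hMinr0, mul_zero]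
    have := (Fintype.linearIndependent_iff.1 hliM) _ hzero
    intro i
    exact this (Sum.inl i)
  have hmapL : Submodule.map L C' = Submodule.span F (Set.range H) := by
    rw [← hG', rowSpan, Submodule.map_span]
    congr 1
    rw [← Set.range_comp]
    rfl
  refine ⟨rowSpan Gres, Gres, aa, rfl, ?_, ?_, ?_, ?_⟩
  · -- finrank
    rw [rowSpan, finrank_span_eq_card (R := F) hliGres]
    simp
  · -- effective length
    intro s
    suffices hex : ∃ i, Gres i s ≠ 0 by
      obtain ⟨i, hi⟩ := hex
      exact ⟨Gres i, Submodule.subset_span ⟨i, rfl⟩, hi⟩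
    by_contra hcon
    push_neg at hcon
    set j : Fin n' := σ.symm (Sum.inl s) with hjdef
    have hjS : j ∉ S := hσinl s
    have hHi0s : H i0 (Sum.inl s) = g i0 * aa s := by
      rw [haadef, hMdef]
      simp only [Sum.elim_inr, Pi.smul_apply, smul_eq_mul]
      rw [← mul_assoc, mul_inv_cancel₀ hgi0, one_mul]
    have hcolaa : (fun i => G' i j) = aa s • g := by
      funext i
      by_cases hii : i = i0
      · rw [hii]
        show G' i0 j = (aa s • g) i0
        rw [show (aa s • g) i0 = aa s * g i0 from rfl, ← hHinl i0 s, hHi0s]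
        ring
      · obtain ⟨i', rfl⟩ := Fin.exists_succAbove_eq hii
        have h0 : M (Sum.inl i') (Sum.inl s) = 0 := hcon i'
        rw [hMdef] at h0
        simp only [Sum.elim_inl, Pi.sub_apply, Pi.smul_apply, smul_eq_mul, sub_eq_zero] at h0
        rw [← hHinl _ s, h0, hHi0s]
        field_simp
        rw [Pi.smul_apply, smul_eq_mul]
        ring
    by_cases haa0 : aa s = 0
    · rw [haa0, zero_smul] at hcolaa
      exact hcol_ne j hcolaa
    · apply hjS
      rw [hSdef]
      simp only [Finset.mem_filter, Finset.mem_univ, true_and]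
      rw [hcolaa]
      exact Submodule.span_singleton_smul_eq (IsUnit.mk0 _ haa0) _
  · -- weights
    intro c hc hcne
    obtain ⟨x, hx⟩ := (Submodule.mem_span_range_iff_exists_fun F).1 hc
    set w : (Fin (n' - r) ⊕ Fin r) → F := ∑ i, x i • M (Sum.inl i) with hwdef
    have hwinl : ∀ s, w (Sum.inl s) = c s := by
      intro s
      rw [hwdef, ← hx]
      simp only [Finset.sum_apply, Pi.smul_apply, smul_eq_mul]
      rfl
    have hwinr : ∀ t, w (Sum.inr t) = 0 := by
      intro t
      rw [hwdef]
      simp only [Finset.sum_apply, Pi.smul_apply, smul_eq_mul]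
      refine Finset.sum_eq_zero fun i _ => ?_
      rw [hMinr0, mul_zero]
    have hwmem : w ∈ Submodule.map L C' := by
      rw [hmapL, ← hspanM]
      exact Submodule.sum_mem _ fun i _ =>
        Submodule.smul_mem _ _ (Submodule.subset_span ⟨Sum.inl i, rfl⟩)
    obtain ⟨c', hc', hLc'⟩ := hwmem
    have hwnorm : hammingNorm w = hammingNorm c := by
      rw [hammingNorm_sum_left w hwinr]
      congr 1
      funext s
      exact hwinl s
    have hwnorm2 : hammingNorm w = hammingNorm c' := by
      rw [← hLc']
      exact hammingNorm_monMap σ d (RingEquiv.refl F) c'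
    have hc'ne : c' ≠ 0 := by
      rintro rfl
      apply hcne
      have : w = 0 := by rw [← hLc']; exact map_zero L
      funext s
      rw [← hwinl s, this]
      rfl
    have := hw c' hc' hc'ne
    rwa [← hwnorm2, hwnorm] at this
  · -- equivalence
    refine ⟨σ, d, RingEquiv.refl F, ?_⟩
    have h1 : monMap σ d (RingEquiv.refl F) '' (C' : Set (Fin n' → F)) =
        ((Submodule.map L C' : Submodule F _) : Set _) := by
      rw [Submodule.map_coe]
      rfl
    rw [h1, hmapL, ← hspanM, ← hrowM]

/-- Corollary 9.  Let `C'` be an `[n',k',W]_q` code with minimum column multiplicity `r`.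
Then among all `[n'-r, k'-1, W]_q` codes `C` such that `C'` is equivalent to the code
generated by `[[Ĝ, 0], [a, 1⋯1]]` (these are exactly the residual codes `C_P` at the
points `P` of column multiplicity `r`), there is one whose weight enumerator is
lexicographically minimal. -/
theorem stmt11 [Fintype F] [DecidableEq F] {n' k' r : ℕ} (W : Set ℕ)
    (hW : ∀ w ∈ W, 1 ≤ w)
    (C' : Submodule F (Fin n' → F)) (hdim : Module.finrank F C' = k')
    (heff : ∀ j, ∃ c ∈ C', c j ≠ 0)
    (hw : ∀ c ∈ C', c ≠ 0 → hammingNorm c ∈ W)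
    (G' : Matrix (Fin k') (Fin n') F) (hG' : rowSpan G' = C')
    (hrlb : ∀ j, r ≤ colMult G' j) (hrex : ∃ j, colMult G' j = r) :
    ∃ (C : Submodule F (Fin (n' - r) → F))
      (Gres : Matrix (Fin (k' - 1)) (Fin (n' - r)) F) (aa : Fin (n' - r) → F),
      rowSpan Gres = C ∧
      Module.finrank F C = k' - 1 ∧
      (∀ j, ∃ c ∈ C, c j ≠ 0) ∧
      (∀ c ∈ C, c ≠ 0 → hammingNorm c ∈ W) ∧
      CodeEquivR C' (rowSpan (extBlock (r := r) Gres aa)) ∧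
      (∀ (C2 : Submodule F (Fin (n' - r) → F))
          (Gres2 : Matrix (Fin (k' - 1)) (Fin (n' - r)) F) (aa2 : Fin (n' - r) → F),
        rowSpan Gres2 = C2 →
        Module.finrank F C2 = k' - 1 →
        (∀ j, ∃ c ∈ C2, c j ≠ 0) →
        (∀ c ∈ C2, c ≠ 0 → hammingNorm c ∈ W) →
        CodeEquivR C' (rowSpan (extBlock (r := r) Gres2 aa2)) →
        lexLE (wEnum C) (wEnum C2)) := by
  classical
  have hfinSub : Finite (Submodule F (Fin (n' - r) → F)) :=
    Finite.of_injective (fun p : Submodule F (Fin (n' - r) → F) => (p : Set (Fin (n' - r) → F)))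
      SetLike.coe_injective
  set SS : Set (Submodule F (Fin (n' - r) → F)) :=
    {C2 | ∃ (Gres2 : Matrix (Fin (k' - 1)) (Fin (n' - r)) F) (aa2 : Fin (n' - r) → F),
      rowSpan Gres2 = C2 ∧
      Module.finrank F C2 = k' - 1 ∧
      (∀ j, ∃ c ∈ C2, c j ≠ 0) ∧
      (∀ c ∈ C2, c ≠ 0 → hammingNorm c ∈ W) ∧
      CodeEquivR C' (rowSpan (extBlock (r := r) Gres2 aa2))} with hSSdef
  obtain ⟨Cw, Gw, aw, hw1, hw2, hw3, hw4, hw5⟩ :=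
    exists_residual W C' hdim heff hw G' hG' hrex
  have hCwSS : Cw ∈ SS := ⟨Gw, aw, hw1, hw2, hw3, hw4, hw5⟩
  set T : Finset (ℕ → ℕ) := (Set.toFinite (wEnum '' SS)).toFinset with hTdef
  have hTne : T.Nonempty := ⟨wEnum Cw, by
    rw [hTdef, Set.Finite.mem_toFinset]; exact ⟨Cw, hCwSS, rfl⟩⟩
  obtain ⟨f, hf, hfmin⟩ := exists_lexLE_min T hTne
  rw [hTdef, Set.Finite.mem_toFinset] at hf
  obtain ⟨C, hCSS, rfl⟩ := hf
  obtain ⟨Gres, aa, h1, h2, h3, h4, h5⟩ := hCSS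
  refine ⟨C, Gres, aa, h1, h2, h3, h4, h5, ?_⟩
  intro C2 Gres2 aa2 g1 g2 g3 g4 g5
  have hC2SS : C2 ∈ SS := ⟨Gres2, aa2, g1, g2, g3, g4, g5⟩
  exact hfmin (wEnum C2) (by rw [hTdef, Set.Finite.mem_toFinset]; exact ⟨C2, hC2SS, rfl⟩)
end

section
/- Every binary linear code of dimension k has at least k minimal codewords. Moreover, this bound is attained: for all integers n ≥ k ≥ 1, the binary [n,k]_2 code obtained from the code generated by the k×k identity matrix by duplicating columns (so that the generator matrix has n columns, each a unit vector, with every unit vector occurring at least once) has exactly k minimal codewords. -/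
/-- A nonzero codeword `c` of a linear code `C` is minimal if the support of no other
nonzero codeword of `C` is contained in the support of `c`. -/
def MinimalCW {n : ℕ} (C : Submodule (ZMod 2) (Fin n → ZMod 2))
    (c : Fin n → ZMod 2) : Prop :=
  c ∈ C ∧ c ≠ 0 ∧
    ∀ c' ∈ C, c' ≠ 0 → c' ≠ c → ¬ (Function.support c' ⊆ Function.support c)

private lemma zmod2_one {a : ZMod 2} (h : a ≠ 0) : a = 1 := by revert a; decide

private lemma exists_min_sub {n : ℕ} (C : Submodule (ZMod 2) (Fin n → ZMod 2))
    (c : Fin n → ZMod 2) (hc : c ∈ C) (hc0 : c ≠ 0) :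
    ∃ c', MinimalCW C c' ∧ Function.support c' ⊆ Function.support c := by
  classical
  set T : Finset (Fin n → ZMod 2) :=
    Finset.univ.filter fun c' => c' ∈ C ∧ c' ≠ 0 ∧
      Function.support c' ⊆ Function.support c with hT
  have hcT : c ∈ T := by simp [hT, hc, hc0]
  obtain ⟨c', hc'T, hmin⟩ :=
    T.exists_min_image (fun v => (Function.support v).toFinset.card) ⟨c, hcT⟩
  simp only [hT, Finset.mem_filter, Finset.mem_univ, true_and] at hc'T
  obtain ⟨h1, h2, h3⟩ := hc'T
  refine ⟨c', ⟨h1, h2, ?_⟩, h3⟩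
  intro d hd hd0 hdc' hsub
  have hdT : d ∈ T := by
    simp only [hT, Finset.mem_filter, Finset.mem_univ, true_and]
    exact ⟨hd, hd0, hsub.trans h3⟩
  have hcard := hmin d hdT
  have hle : (Function.support d).toFinset ⊆ (Function.support c').toFinset := by
    intro j hj; simp only [Set.mem_toFinset] at hj ⊢; exact hsub hj
  have heq : Function.support d = Function.support c' := by
    have := Finset.eq_of_subset_of_card_le hle hcard
    rwa [Set.toFinset_inj] at this
  apply hdc'
  funext j
  have hiff : d j ≠ 0 ↔ c' j ≠ 0 := Set.ext_iff.mp heq j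
  by_cases hj : d j = 0
  · rw [hj]
    symm
    by_contra h
    exact (hiff.mpr h) hj
  · rw [zmod2_one hj, zmod2_one (hiff.mp hj)]

private lemma mem_span_minimal {n : ℕ} (C : Submodule (ZMod 2) (Fin n → ZMod 2)) :
    ∀ c ∈ C, c ∈ Submodule.span (ZMod 2) {c | MinimalCW C c} := by
  classical
  suffices h : ∀ m : ℕ, ∀ c ∈ C, (Function.support c).toFinset.card ≤ m →
      c ∈ Submodule.span (ZMod 2) {c | MinimalCW C c} by
    intro c hc; exact h _ c hc le_rfl
  intro m
  induction m with
  | zero =>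
    intro c hc hcard
    have : Function.support c = ∅ := by
      have := Finset.card_eq_zero.mp (Nat.le_zero.mp hcard)
      rwa [Set.toFinset_eq_empty] at this
    have : c = 0 := by
      funext j
      by_contra h
      exact absurd (show j ∈ Function.support c from h) (by simp [this])
    simp [this]
  | succ m IH =>
    intro c hc hcard
    by_cases hc0 : c = 0
    · simp [hc0]
    obtain ⟨c', hmin, hsub⟩ := exists_min_sub C c hc hc0
    by_cases hcc : c = c'
    · exact hcc ▸ Submodule.subset_span hmin
    set d := c + c' with hd
    have hdC : d ∈ C := C.add_mem hc hmin.1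
    have h2 : ∀ a : ZMod 2, a + a = 0 := by decide
    have hdsub : Function.support d ⊆ Function.support c := by
      intro j hj
      by_contra h
      have hcj : c j = 0 := Function.notMem_support.mp h
      have hc'j : c' j = 0 := by
        by_contra h'
        exact h (hsub h')
      exact hj (by simp [hd, hcj, hc'j])
    have hdnot : ∀ j ∈ Function.support c', d j = 0 := by
      intro j hj
      have h1 : c' j = 1 := zmod2_one hj
      have h2' : c j = 1 := zmod2_one (hsub hj)
      simp [hd, h1, h2']
      decide
    have hss : Function.support d ⊂ Function.support c := by
      obtain ⟨j, hj⟩ := Function.support_nonempty_iff.mpr hmin.2.1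
      refine ⟨hdsub, fun h => ?_⟩
      have := h (hsub hj)
      exact absurd (hdnot j hj) this
    have hcard' : (Function.support d).toFinset.card ≤ m := by
      have : (Function.support d).toFinset ⊂ (Function.support c).toFinset :=
        Set.toFinset_ssubset_toFinset.mpr hss
      have := Finset.card_lt_card this
      omega
    have hdspan := IH d hdC hcard'
    have hceq : c = d + c' := by
      funext j
      show c j = (c j + c' j) + c' j
      rw [add_assoc, h2, add_zero]
    rw [hceq]
    exact Submodule.add_mem _ hdspan (Submodule.subset_span hmin)

/-- Every binary linear code of dimension `k` has at least `k` minimal codewords, and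
the bound is attained: for `n ≥ k ≥ 1`, the `[n,k]_2` code obtained from the code
generated by the `k × k` identity matrix by duplicating columns (its generator matrix
has `n` columns, each a unit vector, every unit vector occurring at least once, i.e.
the code is `{x ∘ f : x ∈ F_2^k}` for a surjection `f`) has exactly `k` minimal
codewords. -/
theorem stmt14 :
    (∀ (n k : ℕ) (C : Submodule (ZMod 2) (Fin n → ZMod 2)),
        Module.finrank (ZMod 2) C = k →
        k ≤ Nat.card {c : Fin n → ZMod 2 // MinimalCW C c}) ∧
    (∀ (n k : ℕ), 1 ≤ k → k ≤ n → ∀ f : Fin n → Fin k, Function.Surjective f →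
        Nat.card {c : Fin n → ZMod 2 //
          MinimalCW (LinearMap.range (LinearMap.funLeft (ZMod 2) (ZMod 2) f)) c} = k) := by
  constructor
  · intro n k C hk
    classical
    have hspan : Submodule.span (ZMod 2) {c | MinimalCW C c} = C := by
      apply le_antisymm
      · rw [Submodule.span_le]
        intro c hc
        exact hc.1
      · intro c hc
        exact mem_span_minimal C c hc
    have h1 : Module.finrank (ZMod 2) ↥(Submodule.span (ZMod 2) {c | MinimalCW C c}) ≤
        ({c | MinimalCW C c}).toFinset.card := finrank_span_le_card _
    rw [hspan, hk] at h1
    have h2 : Nat.card {c : Fin n → ZMod 2 // MinimalCW C c} =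
        ({c | MinimalCW C c}).toFinset.card := by
      rw [Nat.card_eq_fintype_card, Set.toFinset_card]
      rfl
    omega
  · intro n k hk1 hkn f hf
    classical
    set L := LinearMap.funLeft (ZMod 2) (ZMod 2) f with hL
    set C := LinearMap.range L with hC
    have hinj : Function.Injective L := LinearMap.funLeft_injective_of_surjective _ _ _ hf
    set g : Fin k → (Fin n → ZMod 2) := fun i => L (Pi.single i 1) with hg
    have hLapp : ∀ (x : Fin k → ZMod 2) (j : Fin n), L x j = x (f j) := fun _ _ => rfl
    have hsupp : ∀ x : Fin k → ZMod 2, Function.support (L x) = f ⁻¹' Function.support x := by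
      intro x
      ext j
      simp [Function.mem_support, hLapp]
    have hgne : ∀ i, g i ≠ 0 := by
      intro i h
      obtain ⟨j, hj⟩ := hf i
      have := congrFun h j
      rw [hg] at this
      simp only [hLapp] at this
      rw [hj, Pi.single_eq_same] at this
      exact (by decide : (1:ZMod 2) ≠ 0) this
    have hset : {c | MinimalCW C c} = Set.range g := by
      ext c
      constructor
      · rintro ⟨⟨x, rfl⟩, hne, hminimal⟩
        have hx0 : x ≠ 0 := fun h => hne (by rw [h]; exact map_zero L)
        obtain ⟨i, hi⟩ := Function.support_nonempty_iff.mpr hx0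
        refine ⟨i, ?_⟩
        have hxsingle : x = Pi.single i 1 := by
          by_contra hxs
          apply hminimal (g i) ⟨_, rfl⟩ (hgne i)
          · intro h
            exact hxs (hinj h).symm
          · rw [hg, hsupp, hsupp]
            intro j hj
            simp only [Set.mem_preimage, Function.mem_support] at hj ⊢
            intro h0
            apply hj
            by_cases hfi : f j = i
            · rw [hfi] at h0 ⊢
              exact absurd h0 (Function.mem_support.mp hi)
            · exact Pi.single_eq_of_ne hfi 1
        rw [hg, hxsingle]
      · rintro ⟨i, rfl⟩
        refine ⟨⟨_, rfl⟩, hgne i, ?_⟩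
        rintro c' ⟨y, rfl⟩ hy0 hyne hysub
        apply hyne
        rw [hg]
        congr 1
        have hy0' : y ≠ 0 := fun h => hy0 (by rw [h]; exact map_zero L)
        rw [hsupp, hsupp] at hysub
        have hysupp : Function.support y ⊆ {i} := by
          intro i' hi'
          obtain ⟨j, hj⟩ := hf i'
          have hmemp : j ∈ f ⁻¹' Function.support y := by
            simp only [Set.mem_preimage, hj]; exact hi'
          have := hysub hmemp
          simp only [Set.mem_preimage, Function.mem_support] at this
          rw [hj] at this
          by_contra hne'
      -- this : Pi.single i 1 i' ≠ 0, but i' ≠ i so it's 0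
          exact this (Pi.single_eq_of_ne (by simpa using hne') 1)
        obtain ⟨i', hi'⟩ := Function.support_nonempty_iff.mpr hy0'
        have hii : i' = i := hysupp hi'
        funext j
        by_cases hji : j = i
        · subst hji
          have hyj : y j ≠ 0 := by rw [← hii]; exact hi'
          rw [Pi.single_eq_same, zmod2_one hyj]
        · rw [Pi.single_eq_of_ne hji]
          by_contra h
          exact hji (hysupp h ▸ rfl)
    have hginj : Function.Injective g := by
      intro i i' h
      have := hinj h
      by_contra hne
      have := congrFun this i
      rw [Pi.single_eq_same, Pi.single_eq_of_ne hne] at this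
      exact (by decide : (1:ZMod 2) ≠ 0) this
    have : Nat.card {c : Fin n → ZMod 2 // MinimalCW C c} = Nat.card ↑(Set.range g) := by
      congr 1
      rw [← hset]
      rfl
    rw [this, Nat.card_range_of_injective hginj, Nat.card_eq_fintype_card, Fintype.card_fin]
end
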